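/- arXiv:1008.4002 — 3 statements merged into one kernel-verified Lean document; each statement's English description precedes it below -/
import Mathlib

section
/- Let n, k, m be positive integers and let -1 ≤ λ_1 ≤ λ_2 ≤ … ≤ λ_n ≤ 1 be real numbers. Then there exists a partition of the index set {1,…,n} into a set J and sets L_a for a = -m, -m+1, …, m (pairwise disjoint with union {1,…,n}) such that: (1) #J ≤ n/k; (2) |λ_i - λ_j| < 1/m whenever i and j belong to the same set L_a; (3) |λ_i - λ_j| ≥ 1/(km) whenever i ∈ L_a and j ∈ L_b with a ≠ b. -/
/-- **Lemma 1.** Given `-1 ≤ λ_1 ≤ … ≤ λ_n ≤ 1` and positive integers `k, m`, there is a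
partition of `{1,…,n}` into a set `J` with `#J ≤ n/k` and sets `L_a`, `a = -m,…,m`, such that
eigenvalue gaps inside each `L_a` are `< 1/m` and gaps between distinct `L_a, L_b` are
`≥ 1/(km)`. -/
theorem lemma1_partition (n k m : ℕ) (hn : 0 < n) (hk : 0 < k) (hm : 0 < m)
    (lam : Fin n → ℝ) (hmono : Monotone lam)
    (hlow : ∀ i, -1 ≤ lam i) (hhigh : ∀ i, lam i ≤ 1) :
    ∃ (J : Finset (Fin n)) (L : ℤ → Finset (Fin n)),
      -- the sets `L_a` are indexed by `a ∈ {-m, …, m}`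
      (∀ a : ℤ, a ∉ Finset.Icc (-(m : ℤ)) (m : ℤ) → L a = ∅) ∧
      -- the sets `L_a` are pairwise disjoint
      (∀ a b : ℤ, a ≠ b → Disjoint (L a) (L b)) ∧
      -- each `L_a` is disjoint from `J`
      (∀ a : ℤ, Disjoint J (L a)) ∧
      -- together they cover `{1,…,n}`
      (J ∪ (Finset.Icc (-(m : ℤ)) (m : ℤ)).biUnion L = Finset.univ) ∧
      -- Property 1: `#J ≤ n/k`
      ((J.card : ℝ) ≤ (n : ℝ) / (k : ℝ)) ∧
      -- Property 2: small gaps inside each block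
      (∀ a : ℤ, ∀ i ∈ L a, ∀ j ∈ L a, |lam i - lam j| < 1 / (m : ℝ)) ∧
      -- Property 3: separation between distinct blocks
      (∀ a b : ℤ, a ≠ b → ∀ i ∈ L a, ∀ j ∈ L b,
        1 / ((k : ℝ) * (m : ℝ)) ≤ |lam i - lam j|) := by
  classical
  have hkZ : (0:ℤ) < (k:ℤ) := by exact_mod_cast hk
  have hmZ : (0:ℤ) < (m:ℤ) := by exact_mod_cast hm
  set K : ℤ := (k : ℤ) * (m : ℤ) with hKdef
  have hKpos : (0:ℤ) < K := mul_pos hkZ hmZ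
  have hKR : (0:ℝ) < (K:ℝ) := by exact_mod_cast hKpos
  set s : Fin n → ℤ := fun i => ⌊(lam i + 1) * (K : ℝ)⌋ with hsdef
  have hs_lb : ∀ i, (s i : ℝ) ≤ (lam i + 1) * (K:ℝ) := fun i => Int.floor_le _
  have hs_ub : ∀ i, (lam i + 1) * (K:ℝ) < (s i : ℝ) + 1 := fun i => Int.lt_floor_add_one _
  have hs0 : ∀ i, 0 ≤ s i := by
    intro i
    have h1 : (0:ℝ) ≤ (lam i + 1) * (K:ℝ) := by nlinarith [hlow i]
    exact_mod_cast Int.le_floor.2 (by exact_mod_cast h1)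
  have hs2 : ∀ i, s i ≤ 2 * K := by
    intro i
    have h1 : (lam i + 1) * (K:ℝ) ≤ ((2 * K : ℤ) : ℝ) := by
      push_cast; nlinarith [hhigh i]
    exact (Int.floor_mono h1).trans_eq (Int.floor_intCast _)
  -- pigeonhole: choose shift t
  have hfib : (Finset.univ : Finset (Fin n)).card =
      ∑ r ∈ Finset.Ico (0:ℤ) (k:ℤ),
        (Finset.univ.filter (fun i => s i % (k:ℤ) = r)).card := by
    apply Finset.card_eq_sum_card_fiberwise
    intro i _
    exact Finset.mem_Ico.2 ⟨Int.emod_nonneg _ hkZ.ne', Int.emod_lt_of_pos _ hkZ⟩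
  obtain ⟨t, ht, hJcard⟩ : ∃ t ∈ Finset.Ico (0:ℤ) (k:ℤ),
      (k:ℤ) * ((Finset.univ.filter (fun i => s i % (k:ℤ) = t)).card : ℤ) ≤ (n:ℤ) := by
    by_contra h
    push_neg at h
    have hne : (Finset.Ico (0:ℤ) (k:ℤ)).Nonempty := ⟨0, Finset.mem_Ico.2 ⟨le_refl _, hkZ⟩⟩
    have hcard : (Finset.Ico (0:ℤ) (k:ℤ)).card = k := by
      rw [Int.card_Ico]; simp
    have h1 : (k:ℤ) * (n:ℤ) < ∑ r ∈ Finset.Ico (0:ℤ) (k:ℤ),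
        (k:ℤ) * ((Finset.univ.filter (fun i => s i % (k:ℤ) = r)).card : ℤ) := by
      calc (k:ℤ) * (n:ℤ) = ∑ _r ∈ Finset.Ico (0:ℤ) (k:ℤ), (n:ℤ) := by
            rw [Finset.sum_const, hcard]; ring
        _ < _ := Finset.sum_lt_sum_of_nonempty hne (fun r hr => h r hr)
    have h2 : ∑ r ∈ Finset.Ico (0:ℤ) (k:ℤ),
        (k:ℤ) * ((Finset.univ.filter (fun i => s i % (k:ℤ) = r)).card : ℤ)
        = (k:ℤ) * (n:ℤ) := by
      rw [← Finset.mul_sum]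
      congr 1
      have := hfib
      have : (n:ℤ) = ∑ r ∈ Finset.Ico (0:ℤ) (k:ℤ),
          ((Finset.univ.filter (fun i => s i % (k:ℤ) = r)).card : ℤ) := by
        rw [← Nat.cast_sum]
        exact_mod_cast congrArg (Nat.cast : ℕ → ℤ) (by simpa using hfib)
      omega
    omega
  obtain ⟨ht0, htk⟩ := Finset.mem_Ico.1 ht
  set J : Finset (Fin n) := Finset.univ.filter (fun i => s i % (k:ℤ) = t) with hJdef
  set L : ℤ → Finset (Fin n) := fun a =>
    Finset.univ.filter (fun i => s i % (k:ℤ) ≠ t ∧ (s i - t) / (k:ℤ) = a + (m:ℤ) - 1)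
    with hLdef
  -- basic facts about remainders for survivors
  have hrfact : ∀ i : Fin n, s i % (k:ℤ) ≠ t →
      1 ≤ (s i - t) % (k:ℤ) ∧ (s i - t) % (k:ℤ) ≤ (k:ℤ) - 1 ∧
      s i - t = (k:ℤ) * ((s i - t) / (k:ℤ)) + (s i - t) % (k:ℤ) := by
    intro i hi
    have hdm := Int.mul_ediv_add_emod (s i - t) (k:ℤ)
    have hr0 : 0 ≤ (s i - t) % (k:ℤ) := Int.emod_nonneg _ hkZ.ne'
    have hrk : (s i - t) % (k:ℤ) < (k:ℤ) := Int.emod_lt_of_pos _ hkZ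
    have hne : (s i - t) % (k:ℤ) ≠ 0 := by
      intro h0
      apply hi
      have : s i = t + (k:ℤ) * ((s i - t) / (k:ℤ)) := by omega
      rw [this, Int.add_mul_emod_self_left]
      exact Int.emod_eq_of_lt ht0 htk
    exact ⟨by omega, by omega, by omega⟩
  -- quotient bounds for survivors
  have hqbound : ∀ i : Fin n, s i % (k:ℤ) ≠ t →
      -1 ≤ (s i - t) / (k:ℤ) ∧ (s i - t) / (k:ℤ) ≤ 2 * (m:ℤ) - 1 := by
    intro i hi
    obtain ⟨hr1, hr2, hdm⟩ := hrfact i hi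
    have h0 := hs0 i
    have h2 := hs2 i
    have hKk : K = (k:ℤ) * (m:ℤ) := hKdef
    constructor
    · nlinarith [hkZ]
    · nlinarith [hkZ]
  -- gap estimates
  have hgap_lt : ∀ i j : Fin n, lam i - lam j < ((s i - s j : ℤ) : ℝ) / (K:ℝ) + 1/(K:ℝ) := by
    intro i j
    have h1 := hs_ub i
    have h2 := hs_lb j
    rw [← add_div, lt_div_iff₀ hKR]
    push_cast
    nlinarith
  have hgap_ge : ∀ i j : Fin n, ((s i - s j : ℤ) : ℝ) / (K:ℝ) - 1/(K:ℝ) < lam i - lam j := by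
    intro i j
    have h1 := hs_lb i
    have h2 := hs_ub j
    rw [div_sub_div_same, div_lt_iff₀ hKR]
    push_cast
    nlinarith
  refine ⟨J, L, ?_, ?_, ?_, ?_, ?_, ?_, ?_⟩
  · -- L a = ∅ outside Icc
    intro a ha
    rw [Finset.eq_empty_iff_forall_notMem]
    intro i hi
    rw [hLdef, Finset.mem_filter] at hi
    obtain ⟨-, hne, hq⟩ := hi
    obtain ⟨hq1, hq2⟩ := hqbound i hne
    rw [hq] at hq1 hq2
    exact ha (Finset.mem_Icc.2 ⟨by omega, by omega⟩)
  · -- pairwise disjoint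
    intro a b hab
    rw [Finset.disjoint_left]
    intro i hia hib
    rw [hLdef, Finset.mem_filter] at hia hib
    omega
  · -- J disjoint from L a
    intro a
    rw [Finset.disjoint_left]
    intro i hiJ hiL
    rw [hJdef, Finset.mem_filter] at hiJ
    rw [hLdef, Finset.mem_filter] at hiL
    exact hiL.2.1 hiJ.2
  · -- cover
    rw [Finset.eq_univ_iff_forall]
    intro i
    rw [Finset.mem_union]
    by_cases hi : s i % (k:ℤ) = t
    · exact Or.inl (by rw [hJdef]; simp [hi])
    · right
      rw [Finset.mem_biUnion]
      obtain ⟨hq1, hq2⟩ := hqbound i hi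
      refine ⟨(s i - t) / (k:ℤ) - (m:ℤ) + 1, Finset.mem_Icc.2 ⟨by omega, by omega⟩, ?_⟩
      rw [hLdef]
      simp only [Finset.mem_filter, Finset.mem_univ, true_and]
      exact ⟨hi, by ring⟩
  · -- card bound
    have hkR : (0:ℝ) < (k:ℝ) := by exact_mod_cast hk
    rw [le_div_iff₀ hkR]
    have : ((J.card : ℤ) : ℝ) * (k:ℝ) ≤ ((n:ℤ):ℝ) := by
      exact_mod_cast (by rw [mul_comm]; exact hJcard : (J.card : ℤ) * (k:ℤ) ≤ (n:ℤ))
    push_cast at this ⊢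
    linarith
  · -- property 2
    intro a i hi j hj
    rw [hLdef, Finset.mem_filter] at hi hj
    obtain ⟨-, hine, hiq⟩ := hi
    obtain ⟨-, hjne, hjq⟩ := hj
    obtain ⟨hri1, hri2, hidm⟩ := hrfact i hine
    obtain ⟨hrj1, hrj2, hjdm⟩ := hrfact j hjne
    have hqq : (s i - t) / (k:ℤ) = (s j - t) / (k:ℤ) := by omega
    rw [hqq] at hidm
    have hss : s i - s j ≤ (k:ℤ) - 2 ∧ s j - s i ≤ (k:ℤ) - 2 := by
      constructor <;> omega
    have hbound : |lam i - lam j| < ((k:ℤ) - 1 : ℝ) / (K:ℝ) := by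
      rw [abs_sub_lt_iff]
      constructor
      · calc lam i - lam j < ((s i - s j : ℤ) : ℝ) / (K:ℝ) + 1/(K:ℝ) := hgap_lt i j
          _ ≤ ((k:ℤ) - 1 : ℝ) / (K:ℝ) := by
            rw [← add_div]
            gcongr
            have h1 : (s i - s j : ℤ) + 1 ≤ (k:ℤ) - 1 := by omega
            exact_mod_cast h1
      · calc lam j - lam i < ((s j - s i : ℤ) : ℝ) / (K:ℝ) + 1/(K:ℝ) := hgap_lt j i
          _ ≤ ((k:ℤ) - 1 : ℝ) / (K:ℝ) := by
            rw [← add_div]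
            gcongr
            have h1 : (s j - s i : ℤ) + 1 ≤ (k:ℤ) - 1 := by omega
            exact_mod_cast h1
    refine hbound.trans_le ?_
    rw [div_le_div_iff₀ hKR (by exact_mod_cast hmZ)]
    have : (K:ℝ) = (k:ℝ) * (m:ℝ) := by push_cast [hKdef]; ring
    rw [this]
    push_cast
    nlinarith [hkZ]
  · -- property 3
    intro a b hab i hi j hj
    rw [hLdef, Finset.mem_filter] at hi hj
    obtain ⟨-, hine, hiq⟩ := hi
    obtain ⟨-, hjne, hjq⟩ := hj
    obtain ⟨hri1, hri2, hidm⟩ := hrfact i hine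
    obtain ⟨hrj1, hrj2, hjdm⟩ := hrfact j hjne
    have hqne : (s i - t) / (k:ℤ) ≠ (s j - t) / (k:ℤ) := by omega
    have key : ∀ p q : Fin n, s q - s p ≥ 2 → 1/((k:ℝ)*(m:ℝ)) ≤ |lam p - lam q| := by
      intro p q hpq
      have h := hgap_ge q p
      have hKR' : (K:ℝ) = (k:ℝ) * (m:ℝ) := by push_cast [hKdef]; ring
      have h2 : 1/(K:ℝ) ≤ lam q - lam p := by
        have hle : (2:ℝ) ≤ ((s q - s p : ℤ):ℝ) := by exact_mod_cast hpq
        have : (1:ℝ)/(K:ℝ) ≤ ((s q - s p : ℤ):ℝ)/(K:ℝ) - 1/(K:ℝ) := by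
          rw [le_sub_iff_add_le, ← add_div]
          gcongr
          linarith
        linarith
      rw [← hKR']
      calc 1/(K:ℝ) ≤ lam q - lam p := h2
        _ ≤ |lam p - lam q| := by rw [abs_sub_comm]; exact le_abs_self _
    have hsep : ∀ u v : ℤ, u + 1 ≤ v → (k:ℤ) * u + (k:ℤ) ≤ (k:ℤ) * v := by
      intro u v huv
      nlinarith [mul_le_mul_of_nonneg_left huv hkZ.le]
    rcases lt_or_gt_of_ne hqne with h | h
    · refine key i j ?_
      have h2 := hsep _ _ h
      omega
    · rw [abs_sub_comm]
      refine key j i ?_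
      have h2 := hsep _ _ h
      omega
end

section
/- Let H_1, H_2 be n×n complex Hermitian matrices with operator norms ‖H_1‖ ≤ 1 and ‖H_2‖ ≤ 1, and suppose δ := ‖[H_1,H_2]‖_tr ≤ 1/16, where [H_1,H_2] = H_1H_2 - H_2H_1. Then there exist n×n complex Hermitian matrices A_1, A_2 with ‖A_1‖ ≤ 1, ‖A_2‖ ≤ 1, such that [A_1,A_2] = 0, [H_1,A_1] = 0, and ‖H_j - A_j‖_tr ≤ 2δ^{1/4} for j = 1, 2. -/
open Matrix
open scoped Matrix.Norms.L2Operator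

namespace ACH


variable {n : ℕ}

noncomputable def frobSq (A : Matrix (Fin n) (Fin n) ℂ) : ℝ := ∑ i, ∑ j, ‖A i j‖ ^ 2

lemma frobSq_nonneg (A : Matrix (Fin n) (Fin n) ℂ) : 0 ≤ frobSq A := by
  refine Finset.sum_nonneg fun i _ => Finset.sum_nonneg fun j _ => by positivity

lemma dot_eq (w : Fin n → ℂ) :
    dotProduct (star w) w = ((∑ i, ‖w i‖ ^ 2 : ℝ) : ℂ) := by
  simp only [dotProduct, Pi.star_apply, RCLike.star_def, RCLike.conj_mul]
  push_cast
  norm_num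

lemma sum_sq_mulVec_unitary {U : Matrix (Fin n) (Fin n) ℂ}
    (hU : star U * U = 1) (v : Fin n → ℂ) :
    ∑ i, ‖(U *ᵥ v) i‖ ^ 2 = ∑ i, ‖v i‖ ^ 2 := by
  have key : dotProduct (star (U *ᵥ v)) (U *ᵥ v) = dotProduct (star v) v := by
    rw [Matrix.star_mulVec, dotProduct_mulVec, Matrix.vecMul_vecMul,
      ← Matrix.star_eq_conjTranspose, hU, Matrix.vecMul_one]
  rw [dot_eq, dot_eq] at key
  exact_mod_cast key

lemma frobSq_conjTranspose (A : Matrix (Fin n) (Fin n) ℂ) : frobSq Aᴴ = frobSq A := by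
  unfold frobSq
  rw [Finset.sum_comm]
  simp [Matrix.conjTranspose_apply]

lemma frobSq_unitary_mul {U : Matrix (Fin n) (Fin n) ℂ}
    (hU : star U * U = 1) (A : Matrix (Fin n) (Fin n) ℂ) :
    frobSq (U * A) = frobSq A := by
  unfold frobSq
  rw [Finset.sum_comm, Finset.sum_comm (f := fun i j => ‖A i j‖ ^ 2)]
  refine Finset.sum_congr rfl fun j _ => ?_
  have : ∀ i, (U * A) i j = (U *ᵥ fun k => A k j) i := by
    intro i; simp [Matrix.mul_apply, Matrix.mulVec, dotProduct]
  simp_rw [this]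
  exact sum_sq_mulVec_unitary hU _

lemma frobSq_mul_unitary {U : Matrix (Fin n) (Fin n) ℂ}
    (hU : U * star U = 1) (A : Matrix (Fin n) (Fin n) ℂ) :
    frobSq (A * U) = frobSq A := by
  have h1 : star Uᴴ * Uᴴ = 1 := by
    rw [← Matrix.star_eq_conjTranspose, star_star]; exact hU
  rw [← frobSq_conjTranspose (A * U), Matrix.conjTranspose_mul,
    frobSq_unitary_mul h1, frobSq_conjTranspose]

lemma frobSq_conj {U : Matrix (Fin n) (Fin n) ℂ}
    (hU1 : star U * U = 1) (hU2 : U * star U = 1) (A : Matrix (Fin n) (Fin n) ℂ) :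
    frobSq (U * A * star U) = frobSq A := by
  have h2 : star U * star (star U) = 1 := by rwa [star_star]
  rw [frobSq_mul_unitary h2, frobSq_unitary_mul hU1]



variable {n : ℕ}

lemma norm_one_le : ‖(1 : Matrix (Fin n) (Fin n) ℂ)‖ ≤ 1 := by
  rw [Matrix.cstar_norm_def, _root_.map_one]
  exact ContinuousLinearMap.norm_id_le

lemma norm_unitary_le {U : Matrix (Fin n) (Fin n) ℂ} (hU : star U * U = 1) : ‖U‖ ≤ 1 := by
  have h1 : ‖U‖ * ‖U‖ = ‖star U * U‖ := (CStarRing.norm_star_mul_self).symm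
  rw [hU] at h1
  have h2 : ‖U‖ * ‖U‖ ≤ 1 := h1.le.trans norm_one_le
  nlinarith [norm_nonneg U]

lemma norm_conj_le {U : Matrix (Fin n) (Fin n) ℂ}
    (hU1 : star U * U = 1) (hU2 : U * star U = 1) (A : Matrix (Fin n) (Fin n) ℂ) :
    ‖U * A * star U‖ ≤ ‖A‖ := by
  have hsU : star (star U) * star U = 1 := by rwa [star_star]
  have h1 : ‖U‖ ≤ 1 := norm_unitary_le hU1
  have h2 : ‖star U‖ ≤ 1 := norm_unitary_le hsU
  calc ‖U * A * star U‖ ≤ ‖U * A‖ * ‖star U‖ := norm_mul_le _ _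
    _ ≤ ‖U‖ * ‖A‖ * ‖star U‖ := by
        have := norm_mul_le U A
        have h3 : (0:ℝ) ≤ ‖star U‖ := norm_nonneg _
        nlinarith
    _ ≤ ‖A‖ := by
        nlinarith [norm_nonneg A, norm_nonneg U, norm_nonneg (star U),
          mul_nonneg (mul_nonneg (sub_nonneg.mpr h1) (norm_nonneg A)) (norm_nonneg (star U)),
          mul_nonneg (sub_nonneg.mpr h2) (norm_nonneg A)]

lemma mulVec_sq_le (M : Matrix (Fin n) (Fin n) ℂ) (v : Fin n → ℂ) :
    ∑ i, ‖(M *ᵥ v) i‖ ^ 2 ≤ ‖M‖ ^ 2 * ∑ i, ‖v i‖ ^ 2 := by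
  have h0 := Matrix.l2_opNorm_mulVec M ((EuclideanSpace.equiv (Fin n) ℂ).symm v)
  rw [EuclideanSpace.norm_eq, EuclideanSpace.norm_eq] at h0
  have h : Real.sqrt (∑ i, ‖(M *ᵥ v) i‖ ^ 2) ≤ ‖M‖ * Real.sqrt (∑ i, ‖v i‖ ^ 2) := h0
  have h2 := mul_self_le_mul_self (Real.sqrt_nonneg _) h
  rw [Real.mul_self_sqrt (by positivity)] at h2
  calc ∑ i, ‖(M *ᵥ v) i‖ ^ 2
      ≤ (‖M‖ * Real.sqrt (∑ i, ‖v i‖ ^ 2)) * (‖M‖ * Real.sqrt (∑ i, ‖v i‖ ^ 2)) := h2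
    _ = ‖M‖ ^ 2 * ∑ i, ‖v i‖ ^ 2 := by
        rw [show (‖M‖ * Real.sqrt (∑ i, ‖v i‖ ^ 2)) * (‖M‖ * Real.sqrt (∑ i, ‖v i‖ ^ 2))
          = ‖M‖ ^ 2 * (Real.sqrt (∑ i, ‖v i‖ ^ 2) * Real.sqrt (∑ i, ‖v i‖ ^ 2)) by ring,
          Real.mul_self_sqrt (by positivity)]

lemma norm_le_of_mulVec {M : Matrix (Fin n) (Fin n) ℂ} {c : ℝ} (hc : 0 ≤ c)
    (h : ∀ v : Fin n → ℂ, ∑ i, ‖(M *ᵥ v) i‖ ^ 2 ≤ c ^ 2 * ∑ i, ‖v i‖ ^ 2) :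
    ‖M‖ ≤ c := by
  rw [Matrix.cstar_norm_def]
  refine ContinuousLinearMap.opNorm_le_bound _ hc fun x => ?_
  have hx : (Matrix.toEuclideanCLM (𝕜 := ℂ) M) x
      = (EuclideanSpace.equiv (Fin n) ℂ).symm (M *ᵥ (WithLp.equiv _ _ x)) := rfl
  rw [hx]
  have hl : ‖(EuclideanSpace.equiv (Fin n) ℂ).symm (M *ᵥ (WithLp.equiv _ _ x))‖
      = Real.sqrt (∑ i, ‖(M *ᵥ (WithLp.equiv _ _ x)) i‖ ^ 2) := by
    rw [EuclideanSpace.norm_eq]; rfl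
  have hr : ‖x‖ = Real.sqrt (∑ i, ‖(WithLp.equiv _ _ x) i‖ ^ 2) := by
    rw [EuclideanSpace.norm_eq]; rfl
  rw [hl, hr]
  have := h (WithLp.equiv _ _ x)
  calc Real.sqrt (∑ i, ‖(M *ᵥ (WithLp.equiv _ _ x)) i‖ ^ 2)
      ≤ Real.sqrt (c ^ 2 * ∑ i, ‖(WithLp.equiv _ _ x) i‖ ^ 2) := Real.sqrt_le_sqrt this
    _ = c * Real.sqrt (∑ i, ‖(WithLp.equiv _ _ x) i‖ ^ 2) := by
        rw [Real.sqrt_mul (by positivity), Real.sqrt_sq hc]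

lemma frobSq_le_norm (A : Matrix (Fin n) (Fin n) ℂ) :
    (∑ i, ∑ j, ‖A i j‖ ^ 2) ≤ (n : ℝ) * ‖A‖ ^ 2 := by
  rw [Finset.sum_comm]
  have hcol : ∀ j : Fin n, (∑ i, ‖A i j‖ ^ 2) ≤ ‖A‖ ^ 2 := by
    intro j
    have h := mulVec_sq_le A (Pi.single j 1)
    have h1 : ∀ i, (A *ᵥ (Pi.single j 1 : Fin n → ℂ)) i = A i j := by
      intro i
      simp [Matrix.mulVec_single]
    have h2 : (∑ i, ‖(Pi.single j 1 : Fin n → ℂ) i‖ ^ 2) = 1 := by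
      simp [Pi.single_apply, apply_ite norm]
    simp_rw [h1, h2, mul_one] at h
    exact h
  calc (∑ j, ∑ i, ‖A i j‖ ^ 2) ≤ ∑ _j : Fin n, ‖A‖ ^ 2 :=
        Finset.sum_le_sum fun j _ => hcol j
    _ = (n : ℝ) * ‖A‖ ^ 2 := by simp [Finset.sum_const, mul_comm]

lemma diag_entry_le_norm (d : Fin n → ℂ) (i : Fin n) : ‖d i‖ ≤ ‖diagonal d‖ := by
  have h := mulVec_sq_le (diagonal d) (Pi.single i (1:ℂ))
  rw [Matrix.diagonal_mulVec_single] at h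
  have h1 : (∑ k, ‖(Pi.single i (d i * 1) : Fin n → ℂ) k‖ ^ 2) = ‖d i‖ ^ 2 := by
    simp [Pi.single_apply, apply_ite norm]
  have h2 : (∑ k, ‖(Pi.single i 1 : Fin n → ℂ) k‖ ^ 2) = 1 := by
    simp [Pi.single_apply, apply_ite norm]
  rw [h1, h2, mul_one] at h
  have := Real.sqrt_le_sqrt h
  rwa [Real.sqrt_sq (norm_nonneg _), Real.sqrt_sq (norm_nonneg _)] at this

lemma norm_diagonal_le {d : Fin n → ℂ} {c : ℝ} (hc : 0 ≤ c) (h : ∀ i, ‖d i‖ ≤ c) :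
    ‖diagonal d‖ ≤ c := by
  refine norm_le_of_mulVec hc fun v => ?_
  have h1 : ∀ i, (diagonal d *ᵥ v) i = d i * v i := by
    intro i; simp [Matrix.mulVec_diagonal]
  simp_rw [h1]
  rw [Finset.mul_sum]
  refine Finset.sum_le_sum fun i _ => ?_
  rw [norm_mul, mul_pow]
  exact mul_le_mul_of_nonneg_right (pow_le_pow_left₀ (norm_nonneg _) (h i) 2) (by positivity)

lemma pinch_norm_le (h : Matrix (Fin n) (Fin n) ℂ) (B : Fin n → ℤ) :
    ‖Matrix.of (fun i j => if B i = B j then h i j else 0)‖ ≤ ‖h‖ := by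
  set P : Matrix (Fin n) (Fin n) ℂ := Matrix.of (fun i j => if B i = B j then h i j else 0)
  refine norm_le_of_mulVec (norm_nonneg h) fun v => ?_
  set vc : ℤ → (Fin n → ℂ) := fun c j => if B j = c then v j else 0 with hvc
  have hPv : ∀ i, (P *ᵥ v) i = (h *ᵥ vc (B i)) i := by
    intro i
    simp only [Matrix.mulVec, dotProduct, hvc]
    refine Finset.sum_congr rfl fun j _ => ?_
    simp only [P, Matrix.of_apply, mul_ite, mul_zero, ite_mul, zero_mul]
    by_cases hb : B i = B j
    · simp [hb]
    · rw [if_neg hb, if_neg (fun hh : B j = B i => hb hh.symm)]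
  simp_rw [hPv]
  have hfib : (∑ i, ‖(h *ᵥ vc (B i)) i‖ ^ 2)
      = ∑ c ∈ Finset.univ.image B, ∑ i ∈ Finset.univ.filter (fun i => B i = c),
          ‖(h *ᵥ vc (B i)) i‖ ^ 2 := by
    rw [Finset.sum_fiberwise_of_maps_to (fun i _ => Finset.mem_image_of_mem B (Finset.mem_univ i))]
  rw [hfib]
  have step1 : ∀ c ∈ Finset.univ.image B,
      (∑ i ∈ Finset.univ.filter (fun i => B i = c), ‖(h *ᵥ vc (B i)) i‖ ^ 2)
        ≤ ‖h‖ ^ 2 * ∑ j, ‖vc c j‖ ^ 2 := by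
    intro c _
    have e1 : (∑ i ∈ Finset.univ.filter (fun i => B i = c), ‖(h *ᵥ vc (B i)) i‖ ^ 2)
        = ∑ i ∈ Finset.univ.filter (fun i => B i = c), ‖(h *ᵥ vc c) i‖ ^ 2 := by
      refine Finset.sum_congr rfl fun i hi => ?_
      rw [(Finset.mem_filter.mp hi).2]
    rw [e1]
    calc (∑ i ∈ Finset.univ.filter (fun i => B i = c), ‖(h *ᵥ vc c) i‖ ^ 2)
        ≤ ∑ i, ‖(h *ᵥ vc c) i‖ ^ 2 := by
          refine Finset.sum_le_sum_of_subset_of_nonneg (Finset.filter_subset _ _)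
            fun i _ _ => by positivity
      _ ≤ ‖h‖ ^ 2 * ∑ j, ‖vc c j‖ ^ 2 := mulVec_sq_le h (vc c)
  calc (∑ c ∈ Finset.univ.image B, ∑ i ∈ Finset.univ.filter (fun i => B i = c),
          ‖(h *ᵥ vc (B i)) i‖ ^ 2)
      ≤ ∑ c ∈ Finset.univ.image B, ‖h‖ ^ 2 * ∑ j, ‖vc c j‖ ^ 2 :=
        Finset.sum_le_sum step1
    _ = ‖h‖ ^ 2 * ∑ c ∈ Finset.univ.image B, ∑ j, ‖vc c j‖ ^ 2 := by
        rw [Finset.mul_sum]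
    _ = ‖h‖ ^ 2 * ∑ j, ‖v j‖ ^ 2 := by
        congr 1
        rw [Finset.sum_comm]
        refine Finset.sum_congr rfl fun j _ => ?_
        have : ∀ c, ‖vc c j‖ ^ 2 = if B j = c then ‖v j‖ ^ 2 else 0 := by
          intro c
          by_cases hb : B j = c <;> simp [hvc, hb]
        simp_rw [this]
        rw [Finset.sum_ite_eq]
        simp [Finset.mem_image_of_mem B (Finset.mem_univ j)]

-- Floor counting
lemma G_shift (m : ℕ) (hm : 0 < m) (y : ℝ) :
    (∑ k ∈ Finset.range m, ⌊y + 1 / m + k / m⌋) = (∑ k ∈ Finset.range m, ⌊y + k / m⌋) + 1 := by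
  have e1 : ∀ k : ℕ, ⌊y + 1 / (m:ℝ) + k / m⌋ = ⌊y + ((k+1 : ℕ) : ℝ) / m⌋ := by
    intro k
    congr 1
    push_cast
    ring
  simp_rw [e1]
  have e2 : (∑ k ∈ Finset.range m, ⌊y + ((k+1 : ℕ) : ℝ) / m⌋)
      = (∑ k ∈ Finset.range (m+1), ⌊y + (k : ℝ) / m⌋) - ⌊y + (0:ℝ) / m⌋ := by
    rw [Finset.sum_range_succ' (fun k => ⌊y + (k : ℝ) / m⌋) m]
    push_cast
    ring
  rw [e2, Finset.sum_range_succ]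
  have e3 : ⌊y + (m : ℝ) / m⌋ = ⌊y⌋ + 1 := by
    rw [div_self (by positivity : (m:ℝ) ≠ 0), show y + 1 = y + (1:ℤ) by norm_num,
      Int.floor_add_intCast]
  have e4 : ⌊y + (0:ℝ) / m⌋ = ⌊y⌋ := by norm_num
  rw [e3, e4]
  ring

lemma G_add (m : ℕ) (hm : 0 < m) (y : ℝ) (j : ℕ) :
    (∑ k ∈ Finset.range m, ⌊y + (j : ℝ) / m + k / m⌋)
      = (∑ k ∈ Finset.range m, ⌊y + k / m⌋) + j := by
  induction j with
  | zero => simp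
  | succ j ih =>
    have e1 : ∀ k : ℕ, ⌊y + ((j+1 : ℕ) : ℝ) / m + k / m⌋
        = ⌊(y + (j:ℝ)/m) + 1/m + k / m⌋ := by
      intro k; congr 1; push_cast; ring
    simp_rw [e1]
    rw [G_shift m hm (y + (j:ℝ)/m)]
    have e2 : ∀ k : ℕ, ⌊y + (j:ℝ)/m + k/m⌋ = ⌊y + (j:ℝ)/m + k/m⌋ := fun _ => rfl
    rw [ih]
    push_cast
    ring

lemma count_le (m : ℕ) (hm : 0 < m) (u w : ℝ) (hw : 0 ≤ w) :
    (∑ k ∈ Finset.range m, if ⌊u + k / m⌋ = ⌊u + w + k / m⌋ then (0:ℝ) else 1)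
      ≤ m * w + 1 := by
  set j : ℕ := (⌊(m:ℝ) * w⌋ + 1).toNat with hj
  have hfl : (0:ℤ) ≤ ⌊(m:ℝ) * w⌋ := Int.floor_nonneg.mpr (by positivity)
  have hjval : (j : ℤ) = ⌊(m:ℝ) * w⌋ + 1 := by omega
  have hwj : w ≤ (j : ℝ) / m := by
    rw [le_div_iff₀ (by positivity : (0:ℝ) < m)]
    have h1 : (m:ℝ) * w ≤ ⌊(m:ℝ) * w⌋ + 1 := (Int.lt_floor_add_one _).le
    have h2 : ((j:ℤ) : ℝ) = ((⌊(m:ℝ) * w⌋ + 1 : ℤ) : ℝ) := by exact_mod_cast congrArg (fun z : ℤ => (z:ℝ)) hjval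
    push_cast at h2 ⊢
    rw [mul_comm]
    linarith
  -- pointwise: indicator ≤ floor difference
  have key : (∑ k ∈ Finset.range m, if ⌊u + k / m⌋ = ⌊u + w + k / m⌋ then (0:ℝ) else 1)
      ≤ ((∑ k ∈ Finset.range m, ⌊u + w + k / m⌋) - (∑ k ∈ Finset.range m, ⌊u + k / m⌋) : ℤ) := by
    rw [← Finset.sum_sub_distrib]
    push_cast
    refine Finset.sum_le_sum fun k _ => ?_
    have hmono : ⌊u + (k:ℝ) / m⌋ ≤ ⌊u + w + k / m⌋ :=
      Int.floor_le_floor (by linarith)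
    by_cases hb : ⌊u + (k:ℝ) / m⌋ = ⌊u + w + k / m⌋
    · simp [hb]
    · have : ⌊u + (k:ℝ) / m⌋ + 1 ≤ ⌊u + w + k / m⌋ := by omega
      simp only [hb, if_false]
      have : ((⌊u + (k:ℝ) / m⌋ + 1 : ℤ) : ℝ) ≤ ((⌊u + w + (k:ℝ) / m⌋ : ℤ) : ℝ) := by exact_mod_cast this
      push_cast at this
      linarith
  have key2 : ((∑ k ∈ Finset.range m, ⌊u + w + k / m⌋) : ℤ)
      ≤ (∑ k ∈ Finset.range m, ⌊u + (j:ℝ)/m + k / m⌋) := by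
    refine Finset.sum_le_sum fun k _ => Int.floor_le_floor (by linarith)
  have key3 := G_add m hm u j
  have final : ((∑ k ∈ Finset.range m, ⌊u + w + k / m⌋)
      - (∑ k ∈ Finset.range m, ⌊u + k / m⌋) : ℤ) ≤ (j : ℤ) := by
    omega
  calc (∑ k ∈ Finset.range m, if ⌊u + k / m⌋ = ⌊u + w + k / m⌋ then (0:ℝ) else 1)
      ≤ (((∑ k ∈ Finset.range m, ⌊u + w + k / m⌋) - (∑ k ∈ Finset.range m, ⌊u + k / m⌋) : ℤ) : ℝ) := key
    _ ≤ ((j : ℤ) : ℝ) := by exact_mod_cast final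
    _ ≤ m * w + 1 := by
        have hfloor := Int.floor_le ((m:ℝ) * w)
        have h2 : ((j:ℕ) : ℝ) = ((⌊(m:ℝ) * w⌋ : ℤ) : ℝ) + 1 := by exact_mod_cast hjval
        push_cast
        linarith


lemma frobSq_diagonal (f : Fin n → ℂ) : frobSq (diagonal f) = ∑ i, ‖f i‖ ^ 2 := by
  unfold frobSq
  refine Finset.sum_congr rfl fun i _ => ?_
  have : ∀ j, ‖diagonal f i j‖ ^ 2 = if i = j then ‖f i‖ ^ 2 else 0 := by
    intro j
    by_cases h : i = j <;> simp [Matrix.diagonal_apply, h]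
  simp_rw [this]
  simp

lemma conj_herm {U X : Matrix (Fin n) (Fin n) ℂ} (hX : Xᴴ = X) :
    (U * X * star U)ᴴ = U * X * star U := by
  simp [Matrix.conjTranspose_mul, Matrix.star_eq_conjTranspose, hX, Matrix.mul_assoc]

lemma conj_mul_conj {U : Matrix (Fin n) (Fin n) ℂ} (hU1 : star U * U = 1)
    (X Y : Matrix (Fin n) (Fin n) ℂ) :
    (U * X * star U) * (U * Y * star U) = U * (X * Y) * star U := by
  simp only [← Matrix.mul_assoc]
  rw [Matrix.mul_assoc (U * X) (star U) U, hU1, Matrix.mul_one]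

end ACH

noncomputable def hsNorm {n : ℕ} (A : Matrix (Fin n) (Fin n) ℂ) : ℝ :=
  Real.sqrt ((1 / (n : ℝ)) * ∑ i, ∑ j, ‖A i j‖ ^ 2)

noncomputable def opNorm {n : ℕ} (A : Matrix (Fin n) (Fin n) ℂ) : ℝ :=
  ‖(Matrix.toEuclideanCLM (𝕜 := ℂ) A : EuclideanSpace ℂ (Fin n) →L[ℂ] EuclideanSpace ℂ (Fin n))‖

namespace ACH

lemma hsNorm_eq {n : ℕ} (A : Matrix (Fin n) (Fin n) ℂ) :
    hsNorm A = Real.sqrt ((1 / (n : ℝ)) * frobSq A) := rfl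

lemma opNorm_eq {n : ℕ} (A : Matrix (Fin n) (Fin n) ℂ) : opNorm A = ‖A‖ :=
  (Matrix.cstar_norm_def A).symm

end ACH

open ACH

set_option maxHeartbeats 2000000 in
/-- **Theorem (main).** If `H₁, H₂` are Hermitian contractions with
`δ = ‖[H₁,H₂]‖_tr ≤ 1/16`, then there are commuting Hermitian contractions `A₁, A₂`
with `[H₁,A₁] = 0` and `‖H_j - A_j‖_tr ≤ 2 δ^{1/4}`, `j = 1,2`. -/
theorem almost_commuting_hs (n : ℕ) (hn : 0 < n) (H₁ H₂ : Matrix (Fin n) (Fin n) ℂ)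
    (hH₁ : H₁.IsHermitian) (hH₂ : H₂.IsHermitian)
    (hop₁ : opNorm H₁ ≤ 1) (hop₂ : opNorm H₂ ≤ 1)
    (δ : ℝ) (hδ : δ = hsNorm (H₁ * H₂ - H₂ * H₁)) (hδ16 : δ ≤ 1 / 16) :
    ∃ A₁ A₂ : Matrix (Fin n) (Fin n) ℂ,
      A₁.IsHermitian ∧ A₂.IsHermitian ∧
      opNorm A₁ ≤ 1 ∧ opNorm A₂ ≤ 1 ∧
      A₁ * A₂ - A₂ * A₁ = 0 ∧
      H₁ * A₁ - A₁ * H₁ = 0 ∧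
      hsNorm (H₁ - A₁) ≤ 2 * δ ^ ((1 : ℝ) / 4) ∧
      hsNorm (H₂ - A₂) ≤ 2 * δ ^ ((1 : ℝ) / 4) := by
  classical
  have hnR : (0:ℝ) < n := by exact_mod_cast hn
  have hδ0 : 0 ≤ δ := hδ ▸ Real.sqrt_nonneg _
  have hrpow0 : 0 ≤ δ ^ ((1:ℝ)/4) := Real.rpow_nonneg hδ0 _
  rcases eq_or_lt_of_le hδ0 with hδeq | hδpos
  · -- δ = 0 : H₁ and H₂ commute
    have hC : H₁ * H₂ - H₂ * H₁ = 0 := by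
      have h1 : Real.sqrt ((1 / (n:ℝ)) * frobSq (H₁ * H₂ - H₂ * H₁)) = 0 := by
        rw [← hsNorm_eq, ← hδ, ← hδeq]
      have h2 : (1 / (n:ℝ)) * frobSq (H₁ * H₂ - H₂ * H₁) ≤ 0 :=
        Real.sqrt_eq_zero'.mp h1
      have h3 : frobSq (H₁ * H₂ - H₂ * H₁) = 0 := by
        have hle := frobSq_nonneg (H₁ * H₂ - H₂ * H₁)
        nlinarith [one_div_pos.mpr hnR]
      have h4 : ∀ i ∈ (Finset.univ : Finset (Fin n)), ∀ j ∈ (Finset.univ : Finset (Fin n)),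
          ‖(H₁ * H₂ - H₂ * H₁) i j‖ ^ 2 = 0 := by
        have := (Finset.sum_eq_zero_iff_of_nonneg (fun i _ =>
          Finset.sum_nonneg fun j _ => by positivity)).mp h3
        intro i hi j hj
        have := (Finset.sum_eq_zero_iff_of_nonneg (fun j _ => by positivity)).mp
          (this i hi) j hj
        exact this
      ext i j
      have := h4 i (Finset.mem_univ i) j (Finset.mem_univ j)
      have : ‖(H₁ * H₂ - H₂ * H₁) i j‖ = 0 := by nlinarith [norm_nonneg ((H₁ * H₂ - H₂ * H₁) i j)]
      simpa using norm_eq_zero.mp this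
    refine ⟨H₁, H₂, hH₁, hH₂, hop₁, hop₂, hC, by rw [sub_self], ?_, ?_⟩ <;>
    · rw [sub_self]
      have : hsNorm (0 : Matrix (Fin n) (Fin n) ℂ) = 0 := by
        simp [hsNorm]
      rw [this]
      positivity
  · -- main case δ > 0
    set U : Matrix (Fin n) (Fin n) ℂ := (hH₁.eigenvectorUnitary : Matrix (Fin n) (Fin n) ℂ)
      with hUdef
    have hU1 : star U * U = 1 := Unitary.coe_star_mul_self hH₁.eigenvectorUnitary
    have hU2 : U * star U = 1 := Unitary.coe_mul_star_self hH₁.eigenvectorUnitary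
    have hU1' : star (star U) * star U = 1 := by rwa [star_star]
    have hU2' : star U * star (star U) = 1 := by rwa [star_star]
    set lam : Fin n → ℝ := hH₁.eigenvalues with hlam
    set D : Matrix (Fin n) (Fin n) ℂ := Matrix.diagonal (RCLike.ofReal ∘ lam) with hD
    have hspec : star U * H₁ * U = D := by
      have := hH₁.conjStarAlgAut_star_eigenvectorUnitary
      rwa [Unitary.conjStarAlgAut_star_apply] at this
    have hH1eq : H₁ = U * D * star U := by
      rw [← hspec]
      simp only [← Matrix.mul_assoc]
      rw [hU2, Matrix.one_mul, Matrix.mul_assoc H₁ U (star U), hU2, Matrix.mul_one]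
    set h2 : Matrix (Fin n) (Fin n) ℂ := star U * H₂ * U with hh2def
    have hH2eq : H₂ = U * h2 * star U := by
      rw [hh2def]
      simp only [← Matrix.mul_assoc]
      rw [hU2, Matrix.one_mul, Matrix.mul_assoc H₂ U (star U), hU2, Matrix.mul_one]
    have hh2herm : h2ᴴ = h2 := by
      rw [hh2def]
      simp [Matrix.conjTranspose_mul, Matrix.star_eq_conjTranspose, hH₂.eq, Matrix.mul_assoc]
    clear_value U lam D h2
    -- norm of h2 and D
    have hH1n : ‖H₁‖ ≤ 1 := by rw [← opNorm_eq]; exact hop₁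
    have hH2n : ‖H₂‖ ≤ 1 := by rw [← opNorm_eq]; exact hop₂
    have hDn : ‖D‖ ≤ 1 := by
      rw [← hspec]
      calc ‖star U * H₁ * U‖ = ‖star U * H₁ * star (star U)‖ := by rw [star_star]
        _ ≤ ‖H₁‖ := norm_conj_le hU1' hU2' H₁
        _ ≤ 1 := hH1n
    have hh2n : ‖h2‖ ≤ 1 := by
      rw [hh2def]
      calc ‖star U * H₂ * U‖ = ‖star U * H₂ * star (star U)‖ := by rw [star_star]
        _ ≤ ‖H₂‖ := norm_conj_le hU1' hU2' H₂
        _ ≤ 1 := hH2n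
    have hlam_le : ∀ i, |lam i| ≤ 1 := by
      intro i
      have h := diag_entry_le_norm (RCLike.ofReal ∘ lam) i
      rw [← hD] at h
      rw [Function.comp_apply, RCLike.norm_ofReal] at h
      exact h.trans hDn
    -- the commutator in the diagonal frame
    set C : Matrix (Fin n) (Fin n) ℂ := H₁ * H₂ - H₂ * H₁ with hCdef
    set Cd : Matrix (Fin n) (Fin n) ℂ := D * h2 - h2 * D with hCd
    have hCconj : star U * C * U = Cd := by
      have e1 : star U * (H₁ * H₂) * U = D * h2 := by
        rw [← hspec, hh2def]
        simp only [← Matrix.mul_assoc]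
        rw [Matrix.mul_assoc (star U * H₁) U (star U), hU2, Matrix.mul_one]
      have e2 : star U * (H₂ * H₁) * U = h2 * D := by
        rw [← hspec, hh2def]
        simp only [← Matrix.mul_assoc]
        rw [Matrix.mul_assoc (star U * H₂) U (star U), hU2, Matrix.mul_one]
      rw [hCdef, hCd, Matrix.mul_sub, Matrix.sub_mul, e1, e2]
    have hfrobCd : frobSq Cd = (n:ℝ) * δ ^ 2 := by
      have e1 : frobSq C = (n:ℝ) * δ ^ 2 := by
        have : δ ^ 2 = (1 / (n:ℝ)) * frobSq C := by
          rw [hδ, hsNorm_eq, Real.sq_sqrt]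
          have := frobSq_nonneg (H₁ * H₂ - H₂ * H₁)
          positivity
        rw [this]
        field_simp
      have e2 : frobSq Cd = frobSq C := by
        rw [← hCconj]
        have : star U * C * U = star U * C * star (star U) := by rw [star_star]
        rw [this, frobSq_conj hU1' hU2' C]
      rw [e2, e1]
    have hCdentry : ∀ i j, ‖Cd i j‖ = |lam i - lam j| * ‖h2 i j‖ := by
      intro i j
      have e : Cd i j = ((RCLike.ofReal (lam i) : ℂ) - RCLike.ofReal (lam j)) * h2 i j := by
        rw [hCd, hD, Matrix.sub_apply, Matrix.diagonal_mul, Matrix.mul_diagonal,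
          Function.comp_apply, Function.comp_apply]
        ring
      rw [e, norm_mul, ← RCLike.ofReal_sub, RCLike.norm_ofReal]
    -- quantities
    set eps : ℝ := Real.sqrt δ with heps
    have heps0 : 0 < eps := Real.sqrt_pos.mpr hδpos
    set m : ℕ := Nat.ceil (1 / eps) with hmdef
    have hm : 0 < m := Nat.ceil_pos.mpr (by positivity)
    have hmR : (0:ℝ) < m := by exact_mod_cast hm
    set Bf : ℕ → Fin n → ℤ := fun k i => ⌊lam i / eps + (k:ℝ) / m⌋ with hBf
    set S : ℕ → ℝ := fun k => ∑ i, ∑ j, if Bf k i = Bf k j then (0:ℝ) else ‖h2 i j‖ ^ 2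
      with hS
    -- counting bound per pair
    have hcount : ∀ i j : Fin n,
        (∑ k ∈ Finset.range m, if Bf k i = Bf k j then (0:ℝ) else 1)
          ≤ (m:ℝ) * (|lam i - lam j| / eps) + 1 := by
      intro i j
      rcases le_total (lam i) (lam j) with hle | hle
      · have h := count_le m hm (lam i / eps) ((lam j - lam i) / eps)
          (div_nonneg (by linarith) heps0.le)
        have e1 : ∀ k : ℕ, (lam i / eps + (lam j - lam i) / eps + (k:ℝ)/m)
            = lam j / eps + (k:ℝ)/m := by intro k; ring
        have e2 : |lam i - lam j| = lam j - lam i := by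
          rw [abs_sub_comm]; exact abs_of_nonneg (by linarith)
        simp_rw [e1] at h
        rw [e2]
        exact h
      · have h := count_le m hm (lam j / eps) ((lam i - lam j) / eps)
          (div_nonneg (by linarith) heps0.le)
        have e1 : ∀ k : ℕ, (lam j / eps + (lam i - lam j) / eps + (k:ℝ)/m)
            = lam i / eps + (k:ℝ)/m := by intro k; ring
        have e2 : |lam i - lam j| = lam i - lam j := abs_of_nonneg (by linarith)
        simp_rw [e1] at h
        rw [e2]
        have hsym : (∑ k ∈ Finset.range m, if Bf k i = Bf k j then (0:ℝ) else 1)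
            = ∑ k ∈ Finset.range m, if Bf k j = Bf k i then (0:ℝ) else 1 := by
          refine Finset.sum_congr rfl fun k _ => ?_
          by_cases hb : Bf k i = Bf k j
          · simp [hb]
          · rw [if_neg hb, if_neg fun hh => hb hh.symm]
        rw [hsym]
        exact h
    have h1 : ‖h2‖ ^ 2 ≤ 1 := by
      have := pow_le_one₀ (norm_nonneg h2) hh2n (n := 2)
      exact this
    have hfh : frobSq h2 ≤ (n:ℝ) := by
      have h2' : frobSq h2 ≤ (n:ℝ) * ‖h2‖ ^ 2 := frobSq_le_norm h2
      have h3' : (n:ℝ) * ‖h2‖ ^ 2 ≤ (n:ℝ) * 1 := mul_le_mul_of_nonneg_left h1 hnR.le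
      linarith
    -- sum over shifts
    have hT : (∑ i, ∑ j, |lam i - lam j| * ‖h2 i j‖ * ‖h2 i j‖) ≤ (n:ℝ) * δ := by
      have hcs := Finset.sum_mul_sq_le_sq_mul_sq (Finset.univ : Finset (Fin n × Fin n))
        (fun p => ‖Cd p.1 p.2‖) (fun p => ‖h2 p.1 p.2‖)
      have e1 : (∑ p : Fin n × Fin n, ‖Cd p.1 p.2‖ ^ 2) = frobSq Cd := by
        unfold frobSq
        rw [← Finset.univ_product_univ, Finset.sum_product]
      have e2 : (∑ p : Fin n × Fin n, ‖h2 p.1 p.2‖ ^ 2) = frobSq h2 := by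
        unfold frobSq
        rw [← Finset.univ_product_univ, Finset.sum_product]
      have e3 : (∑ i, ∑ j, |lam i - lam j| * ‖h2 i j‖ * ‖h2 i j‖)
          = ∑ p : Fin n × Fin n, ‖Cd p.1 p.2‖ * ‖h2 p.1 p.2‖ := by
        rw [← Finset.univ_product_univ, Finset.sum_product]
        refine Finset.sum_congr rfl fun i _ => Finset.sum_congr rfl fun j _ => ?_
        rw [hCdentry i j]
      rw [e1, e2] at hcs
      rw [e3]
      have hTnn : (0:ℝ) ≤ ∑ p : Fin n × Fin n, ‖Cd p.1 p.2‖ * ‖h2 p.1 p.2‖ :=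
        Finset.sum_nonneg fun p _ => mul_nonneg (norm_nonneg _) (norm_nonneg _)
      have hsq : (∑ p : Fin n × Fin n, ‖Cd p.1 p.2‖ * ‖h2 p.1 p.2‖) ^ 2
          ≤ ((n:ℝ) * δ) ^ 2 := by
        calc (∑ p : Fin n × Fin n, ‖Cd p.1 p.2‖ * ‖h2 p.1 p.2‖) ^ 2
            ≤ frobSq Cd * frobSq h2 := hcs
          _ ≤ ((n:ℝ) * δ ^ 2) * (n:ℝ) := by
              rw [hfrobCd]
              have h4' := frobSq_nonneg h2
              have h5' : (0:ℝ) ≤ (n:ℝ) * δ ^ 2 := by positivity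
              nlinarith
          _ = ((n:ℝ) * δ) ^ 2 := by ring
      have hnd : (0:ℝ) ≤ (n:ℝ) * δ := by positivity
      calc (∑ p : Fin n × Fin n, ‖Cd p.1 p.2‖ * ‖h2 p.1 p.2‖)
          = Real.sqrt ((∑ p : Fin n × Fin n, ‖Cd p.1 p.2‖ * ‖h2 p.1 p.2‖) ^ 2) :=
            (Real.sqrt_sq hTnn).symm
        _ ≤ Real.sqrt (((n:ℝ) * δ) ^ 2) := Real.sqrt_le_sqrt hsq
        _ = (n:ℝ) * δ := Real.sqrt_sq hnd
    have hsum_S : (∑ k ∈ Finset.range m, S k) ≤ (m:ℝ)/eps * ((n:ℝ)*δ) + (n:ℝ) := by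
      have e1 : (∑ k ∈ Finset.range m, S k)
          = ∑ i, ∑ j, (∑ k ∈ Finset.range m, if Bf k i = Bf k j then (0:ℝ) else ‖h2 i j‖ ^ 2) := by
        rw [hS]
        rw [Finset.sum_comm]
        refine Finset.sum_congr rfl fun i _ => Finset.sum_comm
      rw [e1]
      have e2 : ∀ i j : Fin n,
          (∑ k ∈ Finset.range m, if Bf k i = Bf k j then (0:ℝ) else ‖h2 i j‖ ^ 2)
            ≤ (m:ℝ)/eps * (|lam i - lam j| * ‖h2 i j‖ * ‖h2 i j‖) + ‖h2 i j‖ ^ 2 := by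
        intro i j
        have e3 : (∑ k ∈ Finset.range m, if Bf k i = Bf k j then (0:ℝ) else ‖h2 i j‖ ^ 2)
            = ‖h2 i j‖ ^ 2 * ∑ k ∈ Finset.range m, if Bf k i = Bf k j then (0:ℝ) else 1 := by
          rw [Finset.mul_sum]
          refine Finset.sum_congr rfl fun k _ => ?_
          by_cases hb : Bf k i = Bf k j <;> simp [hb]
        rw [e3]
        have hc := hcount i j
        have hnn : (0:ℝ) ≤ ‖h2 i j‖ ^ 2 := by positivity
        calc ‖h2 i j‖ ^ 2 * (∑ k ∈ Finset.range m, if Bf k i = Bf k j then (0:ℝ) else 1)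
            ≤ ‖h2 i j‖ ^ 2 * ((m:ℝ) * (|lam i - lam j| / eps) + 1) := by
              refine mul_le_mul_of_nonneg_left hc hnn
          _ = (m:ℝ)/eps * (|lam i - lam j| * ‖h2 i j‖ * ‖h2 i j‖) + ‖h2 i j‖ ^ 2 := by
              field_simp
        done
      calc (∑ i, ∑ j, (∑ k ∈ Finset.range m, if Bf k i = Bf k j then (0:ℝ) else ‖h2 i j‖ ^ 2))
          ≤ ∑ i, ∑ j, ((m:ℝ)/eps * (|lam i - lam j| * ‖h2 i j‖ * ‖h2 i j‖) + ‖h2 i j‖ ^ 2) :=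
            Finset.sum_le_sum fun i _ => Finset.sum_le_sum fun j _ => e2 i j
        _ = (m:ℝ)/eps * (∑ i, ∑ j, |lam i - lam j| * ‖h2 i j‖ * ‖h2 i j‖)
              + ∑ i, ∑ j, ‖h2 i j‖ ^ 2 := by
            rw [Finset.mul_sum]
            rw [← Finset.sum_add_distrib]
            refine Finset.sum_congr rfl fun i _ => ?_
            rw [Finset.mul_sum, ← Finset.sum_add_distrib]
        _ ≤ (m:ℝ)/eps * ((n:ℝ)*δ) + (n:ℝ) := by
            have hf : (∑ i, ∑ j, ‖h2 i j‖ ^ 2) ≤ (n:ℝ) := hfh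
            have hme : (0:ℝ) ≤ (m:ℝ)/eps := by positivity
            have := mul_le_mul_of_nonneg_left hT hme
            linarith
    -- pigeonhole
    have hex : ∃ k ∈ Finset.range m, S k ≤ (n:ℝ)*δ/eps + (n:ℝ)/m := by
      by_contra hcon
      push_neg at hcon
      have : (∑ k ∈ Finset.range m, ((n:ℝ)*δ/eps + (n:ℝ)/m)) < ∑ k ∈ Finset.range m, S k := by
        refine Finset.sum_lt_sum_of_nonempty (Finset.nonempty_range_iff.mpr hm.ne') ?_
        intro k hk
        exact hcon k hk
      rw [Finset.sum_const, Finset.card_range, nsmul_eq_mul] at this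
      have hm0 : (m:ℝ) ≠ 0 := ne_of_gt hmR
      have e5 : (m:ℝ) * ((n:ℝ)/m) = n := by
        rw [mul_comm ((m:ℝ)) ((n:ℝ)/m), div_mul_cancel₀ _ hm0]
      have e4 : (m:ℝ) * ((n:ℝ)*δ/eps + (n:ℝ)/m) = (m:ℝ)/eps * ((n:ℝ)*δ) + (n:ℝ) := by
        rw [mul_add, e5]
        ring
      rw [e4] at this
      linarith [hsum_S]
    obtain ⟨k₀, _, hk₀⟩ := hex
    set B : Fin n → ℤ := Bf k₀ with hB
    -- bucket width
    have hwidth : ∀ i j : Fin n, B i = B j → |lam i - lam j| < eps := by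
      intro i j hij
      have h1 := Int.floor_le (lam i / eps + (k₀:ℝ)/m)
      have h2 := Int.lt_floor_add_one (lam i / eps + (k₀:ℝ)/m)
      have h3 := Int.floor_le (lam j / eps + (k₀:ℝ)/m)
      have h4 := Int.lt_floor_add_one (lam j / eps + (k₀:ℝ)/m)
      have hij' : (⌊lam i / eps + (k₀:ℝ)/m⌋ : ℝ) = (⌊lam j / eps + (k₀:ℝ)/m⌋ : ℝ) := by
        exact_mod_cast congrArg (fun z : ℤ => (z:ℝ)) hij
      have habs : |lam i / eps - lam j / eps| < 1 := by
        rw [abs_lt]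
        constructor <;> nlinarith
      have e : lam i - lam j = (lam i / eps - lam j / eps) * eps := by
        field_simp
      rw [e, abs_mul, abs_of_pos heps0]
      nlinarith [abs_nonneg (lam i / eps - lam j / eps)]
    -- representative construction
    have hfibne : ∀ i : Fin n, (Finset.univ.filter (fun j => B j = B i)).Nonempty :=
      fun i => ⟨i, by simp⟩
    set rep : Fin n → Fin n :=
      fun i => (Finset.univ.filter (fun j => B j = B i)).min' (hfibne i) with hrep
    set mu : Fin n → ℝ := fun i => lam (rep i) with hmu
    have hrepB : ∀ i, B (rep i) = B i := by
      intro i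
      have := (Finset.univ.filter (fun j => B j = B i)).min'_mem (hfibne i)
      exact (Finset.mem_filter.mp this).2
    have hmin'_congr : ∀ (s t : Finset (Fin n)) (hs : s.Nonempty) (ht : t.Nonempty),
        s = t → s.min' hs = t.min' ht := by
      rintro s t hs ht rfl; rfl
    have hrep_eq : ∀ i j, B i = B j → rep i = rep j := by
      intro i j hij
      refine hmin'_congr _ _ _ _ ?_
      ext x
      simp [hij]
    have hmu_eq : ∀ i j, B i = B j → mu i = mu j :=
      fun i j h => congrArg lam (hrep_eq i j h)
    have hmu_close : ∀ i, |lam i - mu i| < eps := by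
      intro i
      have := hwidth i (rep i) (hrepB i).symm
      exact this
    have hmu_le : ∀ i, |mu i| ≤ 1 := fun i => hlam_le (rep i)
    -- matrices
    set Ad1 : Matrix (Fin n) (Fin n) ℂ := Matrix.diagonal (fun i => (RCLike.ofReal (mu i) : ℂ))
      with hAd1
    set Ad2 : Matrix (Fin n) (Fin n) ℂ := Matrix.of (fun i j => if B i = B j then h2 i j else 0)
      with hAd2
    refine ⟨U * Ad1 * star U, U * Ad2 * star U, ?_, ?_, ?_, ?_, ?_, ?_, ?_, ?_⟩
    · -- A₁ Hermitian
      refine conj_herm ?_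
      rw [hAd1, Matrix.diagonal_conjTranspose]
      refine congrArg Matrix.diagonal ?_
      funext i
      simp [Pi.star_apply, RCLike.conj_ofReal]
    · -- A₂ Hermitian
      refine conj_herm ?_
      ext i j
      rw [Matrix.conjTranspose_apply, hAd2]
      simp only [Matrix.of_apply]
      by_cases hb : B i = B j
      · rw [if_pos hb, if_pos hb.symm]
        have : h2ᴴ i j = h2 i j := by rw [hh2herm]
        rw [Matrix.conjTranspose_apply] at this
        exact this
      · rw [if_neg hb, if_neg fun hh => hb hh.symm, star_zero]
    · -- opNorm A₁ ≤ 1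
      rw [opNorm_eq]
      refine (norm_conj_le hU1 hU2 Ad1).trans ?_
      refine norm_diagonal_le zero_le_one fun i => ?_
      rw [RCLike.norm_ofReal]
      exact hmu_le i
    · -- opNorm A₂ ≤ 1
      rw [opNorm_eq]
      refine (norm_conj_le hU1 hU2 Ad2).trans ?_
      exact (pinch_norm_le h2 B).trans hh2n
    · -- commuting
      rw [conj_mul_conj hU1, conj_mul_conj hU1]
      have : Ad1 * Ad2 = Ad2 * Ad1 := by
        ext i j
        simp only [hAd1, hAd2, Matrix.diagonal_mul, Matrix.mul_diagonal, Matrix.of_apply]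
        by_cases hb : B i = B j
        · simp [hb, hmu_eq i j hb, mul_comm]
        · simp [hb]
      rw [this, sub_self]
    · -- commutes with H₁
      rw [hH1eq, conj_mul_conj hU1, conj_mul_conj hU1]
      have : D * Ad1 = Ad1 * D := by
        rw [hD, hAd1, Matrix.diagonal_mul_diagonal, Matrix.diagonal_mul_diagonal]
        refine congrArg Matrix.diagonal ?_
        funext i
        exact mul_comm _ _
      rw [this, sub_self]
    · -- hs bound 1
      have hd1 : H₁ - U * Ad1 * star U = U * (D - Ad1) * star U := by
        rw [hH1eq, ← Matrix.sub_mul, ← Matrix.mul_sub]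
      rw [hd1, hsNorm_eq, frobSq_conj hU1 hU2]
      have hfe : frobSq (D - Ad1) ≤ (n:ℝ) * eps ^ 2 := by
        have : D - Ad1 = Matrix.diagonal (fun i => (RCLike.ofReal (lam i - mu i) : ℂ)) := by
          rw [hD, hAd1, Matrix.diagonal_sub]
          refine congrArg Matrix.diagonal ?_
          funext i
          simp [Function.comp_apply, RCLike.ofReal_sub]
        rw [this, frobSq_diagonal]
        have hb : ∀ i : Fin n, ‖(RCLike.ofReal (lam i - mu i) : ℂ)‖ ^ 2 ≤ eps ^ 2 := by
          intro i
          rw [RCLike.norm_ofReal]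
          have h1 := (hmu_close i).le
          have h2 := abs_nonneg (lam i - mu i)
          nlinarith
        calc (∑ i, ‖(RCLike.ofReal (lam i - mu i) : ℂ)‖ ^ 2) ≤ ∑ _i : Fin n, eps ^ 2 :=
              Finset.sum_le_sum fun i _ => hb i
          _ = (n:ℝ) * eps ^ 2 := by rw [Finset.sum_const]; simp [nsmul_eq_mul]
      have hfin : (1 / (n:ℝ)) * frobSq (D - Ad1) ≤ eps ^ 2 := by
        have h0 : (0:ℝ) < 1 / n := by positivity
        calc (1 / (n:ℝ)) * frobSq (D - Ad1) ≤ (1 / (n:ℝ)) * ((n:ℝ) * eps ^ 2) := by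
              nlinarith
          _ = eps ^ 2 := by field_simp
      have heps_le : eps ≤ 2 * δ ^ ((1:ℝ)/4) := by
        have hq : δ ^ ((1:ℝ)/4) * δ ^ ((1:ℝ)/4) = δ ^ ((1:ℝ)/2) := by
          rw [← Real.rpow_add hδpos]; norm_num
        have hsq : eps = δ ^ ((1:ℝ)/2) := by
          rw [heps, Real.sqrt_eq_rpow]
        have hle1 : δ ^ ((1:ℝ)/4) ≤ 1 := by
          refine Real.rpow_le_one hδ0 (by linarith) (by norm_num)
        rw [hsq, ← hq]
        nlinarith [hrpow0]
      calc Real.sqrt ((1 / (n:ℝ)) * frobSq (D - Ad1))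
          ≤ Real.sqrt (eps ^ 2) := Real.sqrt_le_sqrt hfin
        _ = eps := Real.sqrt_sq heps0.le
        _ ≤ 2 * δ ^ ((1:ℝ)/4) := heps_le
    · -- hs bound 2
      have hd2 : H₂ - U * Ad2 * star U = U * (h2 - Ad2) * star U := by
        rw [hH2eq, ← Matrix.sub_mul, ← Matrix.mul_sub]
      rw [hd2, hsNorm_eq, frobSq_conj hU1 hU2]
      have hfe : frobSq (h2 - Ad2) = S k₀ := by
        rw [hS]
        unfold frobSq
        refine Finset.sum_congr rfl fun i _ => Finset.sum_congr rfl fun j _ => ?_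
        rw [Matrix.sub_apply, hAd2]
        simp only [Matrix.of_apply]
        by_cases hb : B i = B j
        · rw [if_pos hb]
          have : B i = B j ↔ Bf k₀ i = Bf k₀ j := Iff.rfl
          rw [if_pos hb, sub_self, norm_zero]
          norm_num
        · rw [if_neg hb, if_neg hb, sub_zero]
      rw [hfe]
      have hSle : (1 / (n:ℝ)) * S k₀ ≤ 2 * Real.sqrt δ := by
        have h1 : δ / eps = Real.sqrt δ := by
          rw [heps, Real.div_sqrt]
        have h2 : 1 / (m:ℝ) ≤ eps := by
          have := Nat.le_ceil (1 / eps)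
          have h3 : (1:ℝ) / eps ≤ (m:ℝ) := by exact_mod_cast this
          have h4 : (0:ℝ) < 1 / eps := by positivity
          calc 1 / (m:ℝ) ≤ 1 / (1 / eps) := one_div_le_one_div_of_le h4 h3
            _ = eps := one_div_one_div _
        have h5 : (1 / (n:ℝ)) * S k₀ ≤ δ/eps + 1/(m:ℝ) := by
          have h6 : (1 / (n:ℝ)) * ((n:ℝ)*δ/eps + (n:ℝ)/m) = δ/eps + 1/(m:ℝ) := by
            field_simp
          have h0 : (0:ℝ) < 1 / n := by positivity
          have h8 : (1 / (n:ℝ)) * S k₀ ≤ (1 / (n:ℝ)) * ((n:ℝ)*δ/eps + (n:ℝ)/m) := by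
            nlinarith [hk₀]
          linarith [h6, h8]
        rw [h1] at h5
        have h7 : eps = Real.sqrt δ := heps
        linarith [h2, h5, h7 ▸ h2]
      have htarget : 2 * Real.sqrt δ ≤ (2 * δ ^ ((1:ℝ)/4)) ^ 2 := by
        have hq : δ ^ ((1:ℝ)/4) * δ ^ ((1:ℝ)/4) = δ ^ ((1:ℝ)/2) := by
          rw [← Real.rpow_add hδpos]; norm_num
        have hsq : Real.sqrt δ = δ ^ ((1:ℝ)/2) := Real.sqrt_eq_rpow δ
        rw [hsq, ← hq]
        have : (2 * δ ^ ((1:ℝ)/4)) ^ 2 = 4 * (δ ^ ((1:ℝ)/4) * δ ^ ((1:ℝ)/4)) := by ring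
        rw [this]
        nlinarith [hrpow0]
      calc Real.sqrt ((1 / (n:ℝ)) * S k₀)
          ≤ Real.sqrt ((2 * δ ^ ((1:ℝ)/4)) ^ 2) :=
            Real.sqrt_le_sqrt (hSle.trans htarget)
        _ = 2 * δ ^ ((1:ℝ)/4) := Real.sqrt_sq (by positivity)
end

section
/- Let H_1, H_2 be n×n complex Hermitian matrices with operator norms ‖H_1‖ ≤ 1 and ‖H_2‖ ≤ 1, and suppose δ := ‖[H_1,H_2]‖_tr ≤ 1/16. Then there exist n×n complex Hermitian matrices A_1, A_2 with ‖A_1‖ ≤ 1, ‖A_2‖ ≤ 1, such that [A_1,A_2] = 0, [H_1,A_1] = 0, ‖H_1 - A_1‖_tr ≤ 2δ^{1/4}, and ‖H_2 - A_2‖_tr ≤ √3 · δ^{1/4}. -/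
namespace ACH
open Matrix
open scoped Matrix.Norms.L2Operator

variable {n : ℕ}

lemma euclid_norm_sq (x : EuclideanSpace ℂ (Fin n)) : ‖x‖ ^ 2 = ∑ i, ‖x i‖ ^ 2 := by
  rw [EuclideanSpace.norm_eq, Real.sq_sqrt (by positivity)]

lemma opNorm_nonneg (A : Matrix (Fin n) (Fin n) ℂ) : 0 ≤ opNorm A := norm_nonneg _

lemma clm_apply (A : Matrix (Fin n) (Fin n) ℂ) (v : Fin n → ℂ) :
    (Matrix.toEuclideanCLM (𝕜 := ℂ) A ((WithLp.equiv 2 (Fin n → ℂ)).symm v)) =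
      (WithLp.equiv 2 (Fin n → ℂ)).symm (A *ᵥ v) := by
  exact toEuclideanCLM_toLp A v

lemma sq_mulVec_le (A : Matrix (Fin n) (Fin n) ℂ) (v : Fin n → ℂ) :
    ∑ i, ‖(A *ᵥ v) i‖ ^ 2 ≤ (opNorm A) ^ 2 * ∑ i, ‖v i‖ ^ 2 := by
  have h := (Matrix.toEuclideanCLM (𝕜 := ℂ) A).le_opNorm ((WithLp.equiv 2 (Fin n → ℂ)).symm v)
  rw [clm_apply] at h
  have h2 : ‖(WithLp.equiv 2 (Fin n → ℂ)).symm (A *ᵥ v)‖ ^ 2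
      ≤ (opNorm A) ^ 2 * ‖(WithLp.equiv 2 (Fin n → ℂ)).symm v‖ ^ 2 := by
    rw [← mul_pow]
    exact pow_le_pow_left₀ (norm_nonneg _) h 2
  rw [euclid_norm_sq, euclid_norm_sq] at h2
  simpa using h2

lemma opNorm_le_of_bound (A : Matrix (Fin n) (Fin n) ℂ) {c : ℝ} (hc : 0 ≤ c)
    (h : ∀ v : Fin n → ℂ, ∑ i, ‖(A *ᵥ v) i‖ ^ 2 ≤ c ^ 2 * ∑ i, ‖v i‖ ^ 2) :
    opNorm A ≤ c := by
  apply ContinuousLinearMap.opNorm_le_bound _ hc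
  intro x
  have hx : x = (WithLp.equiv 2 (Fin n → ℂ)).symm (WithLp.equiv 2 (Fin n → ℂ) x) := rfl
  rw [hx, clm_apply]
  set v := WithLp.equiv 2 (Fin n → ℂ) x with hv
  refine le_of_pow_le_pow_left₀ two_ne_zero (by positivity) ?_
  rw [mul_pow, euclid_norm_sq, euclid_norm_sq]
  simpa using h v

lemma col_sq_le (A : Matrix (Fin n) (Fin n) ℂ) (j : Fin n) :
    ∑ i, ‖A i j‖ ^ 2 ≤ (opNorm A) ^ 2 := by
  have := sq_mulVec_le A (Pi.single j 1)
  rw [Matrix.mulVec_single_one] at this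
  simp only [Matrix.col_apply] at this
  calc ∑ i, ‖A i j‖ ^ 2 ≤ (opNorm A) ^ 2 * ∑ i, ‖Pi.single (M := fun _ => ℂ) j 1 i‖ ^ 2 := this
    _ = (opNorm A) ^ 2 := by
        rw [Finset.sum_eq_single j]
        · simp
        · intro b _ hb; simp [Pi.single_apply, hb]
        · simp

lemma entry_le (A : Matrix (Fin n) (Fin n) ℂ) (i j : Fin n) : ‖A i j‖ ≤ opNorm A := by
  refine le_of_pow_le_pow_left₀ two_ne_zero (opNorm_nonneg A) ?_
  calc ‖A i j‖ ^ 2 ≤ ∑ i', ‖A i' j‖ ^ 2 :=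
        Finset.single_le_sum (f := fun i' => ‖A i' j‖ ^ 2) (fun i _ => by positivity)
          (Finset.mem_univ i)
    _ ≤ (opNorm A) ^ 2 := col_sq_le A j


lemma opNorm_eq_norm (A : Matrix (Fin n) (Fin n) ℂ) : opNorm A = ‖A‖ := rfl

lemma opNorm_conj {U : Matrix (Fin n) (Fin n) ℂ} (hU : U ∈ Matrix.unitaryGroup (Fin n) ℂ)
    (A : Matrix (Fin n) (Fin n) ℂ) : opNorm (U * A * star U) = opNorm A := by
  rw [opNorm_eq_norm, opNorm_eq_norm, CStarRing.norm_mul_mem_unitary _ (Unitary.star_mem hU),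
    CStarRing.norm_mem_unitary_mul _ hU]

lemma sum_sq_eq_trace (A : Matrix (Fin n) (Fin n) ℂ) :
    ∑ i, ∑ j, ‖A i j‖ ^ 2 = (Matrix.trace (Aᴴ * A)).re := by
  rw [Matrix.trace, Finset.sum_comm]
  rw [Complex.re_sum]
  apply Finset.sum_congr rfl
  intro j _
  rw [Matrix.diag_apply, Matrix.mul_apply, Complex.re_sum]
  apply Finset.sum_congr rfl
  intro i _
  rw [Matrix.conjTranspose_apply]
  simp [Complex.mul_re, Complex.sq_norm, Complex.normSq_apply]

lemma hsNorm_conj {U : Matrix (Fin n) (Fin n) ℂ} (hU : U ∈ Matrix.unitaryGroup (Fin n) ℂ)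
    (A : Matrix (Fin n) (Fin n) ℂ) : hsNorm (U * A * star U) = hsNorm A := by
  unfold hsNorm
  rw [sum_sq_eq_trace, sum_sq_eq_trace]
  congr 2
  have h1 : star U * U = 1 := Unitary.star_mul_self_of_mem hU
  have : (U * A * star U)ᴴ * (U * A * star U) = U * (Aᴴ * A) * star U := by
    rw [← Matrix.star_eq_conjTranspose, ← Matrix.star_eq_conjTranspose]
    calc star (U * A * star U) * (U * A * star U)
        = U * star A * ((star U * U) * (A * star U)) := by
          simp only [StarMul.star_mul, star_star, mul_assoc]
      _ = U * (star A * A) * star U := by rw [h1, one_mul]; simp only [mul_assoc]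
  rw [this, Matrix.trace_mul_cycle, ← mul_assoc, h1, one_mul]


end ACH

namespace ACH
open Matrix
variable {n : ℕ}

lemma hsNorm_nonneg (A : Matrix (Fin n) (Fin n) ℂ) : 0 ≤ hsNorm A := Real.sqrt_nonneg _

lemma hsNorm_sq (A : Matrix (Fin n) (Fin n) ℂ) :
    hsNorm A ^ 2 = (1 / (n : ℝ)) * ∑ i, ∑ j, ‖A i j‖ ^ 2 := by
  rw [hsNorm, Real.sq_sqrt (by positivity)]

lemma hsNorm_le_opNorm (hn : 0 < n) (A : Matrix (Fin n) (Fin n) ℂ) :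
    hsNorm A ≤ opNorm A := by
  refine le_of_pow_le_pow_left₀ two_ne_zero (opNorm_nonneg A) ?_
  rw [hsNorm_sq]
  rw [Finset.sum_comm]
  have h : ∑ j, ∑ i, ‖A i j‖ ^ 2 ≤ ∑ _j : Fin n, (opNorm A) ^ 2 :=
    Finset.sum_le_sum fun j _ => col_sq_le A j
  rw [Finset.sum_const, Finset.card_univ, Fintype.card_fin, nsmul_eq_mul] at h
  calc (1 / (n : ℝ)) * ∑ j, ∑ i, ‖A i j‖ ^ 2 ≤ (1 / (n : ℝ)) * ((n : ℝ) * (opNorm A) ^ 2) := by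
        apply mul_le_mul_of_nonneg_left h (by positivity)
    _ = (opNorm A) ^ 2 := by
        field_simp
    
lemma eq_zero_of_hsNorm (hn : 0 < n) {A : Matrix (Fin n) (Fin n) ℂ} (h : hsNorm A = 0) :
    A = 0 := by
  rw [hsNorm, Real.sqrt_eq_zero'] at h
  have hnn : (0:ℝ) < 1 / (n : ℝ) := by positivity
  · have hsum : ∑ i, ∑ j, ‖A i j‖ ^ 2 ≤ 0 := by
      by_contra hc
      push_neg at hc
      nlinarith [h]
    have h0 : ∑ i, ∑ j, ‖A i j‖ ^ 2 = 0 :=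
      le_antisymm hsum (Finset.sum_nonneg fun i _ => Finset.sum_nonneg fun j _ => by positivity)
    rw [Finset.sum_eq_zero_iff_of_nonneg (fun i _ => Finset.sum_nonneg fun j _ => by positivity)]
      at h0
    ext i j
    have := h0 i (Finset.mem_univ i)
    rw [Finset.sum_eq_zero_iff_of_nonneg (fun j _ => by positivity)] at this
    have := this j (Finset.mem_univ j)
    simpa using pow_eq_zero_iff two_ne_zero |>.mp this

lemma opNorm_diagonal_le (v : Fin n → ℝ) {c : ℝ} (hc : 0 ≤ c) (h : ∀ i, |v i| ≤ c) :
    opNorm (Matrix.diagonal (fun i => (v i : ℂ))) ≤ c := by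
  apply opNorm_le_of_bound _ hc
  intro w
  rw [Finset.mul_sum]
  apply Finset.sum_le_sum
  intro i _
  rw [Matrix.mulVec_diagonal]
  rw [norm_mul, mul_pow]
  have : ‖((v i : ℝ) : ℂ)‖ = |v i| := (Complex.norm_real _).trans (Real.norm_eq_abs _)
  rw [this]
  apply mul_le_mul_of_nonneg_right _ (by positivity)
  exact pow_le_pow_left₀ (abs_nonneg _) (h i) 2

lemma opNorm_pinch (K : Matrix (Fin n) (Fin n) ℂ) (k : Fin n → ℤ) :
    opNorm (Matrix.of fun i j => if k i = k j then K i j else 0) ≤ opNorm K := by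
  classical
  apply opNorm_le_of_bound _ (opNorm_nonneg K)
  intro v
  set B : Matrix (Fin n) (Fin n) ℂ := Matrix.of fun i j => if k i = k j then K i j else 0 with hB
  set vc : ℤ → (Fin n → ℂ) := fun c j => if k j = c then v j else 0 with hvc
  have key : ∀ i, (B *ᵥ v) i = (K *ᵥ (vc (k i))) i := by
    intro i
    simp only [Matrix.mulVec, dotProduct, hB, hvc, Matrix.of_apply]
    apply Finset.sum_congr rfl
    intro j _
    by_cases hkj : k i = k j
    · rw [if_pos hkj, if_pos hkj.symm]
    · rw [if_neg hkj, if_neg (fun hh => hkj hh.symm), zero_mul, mul_zero]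
  have step1 : ∑ i, ‖(B *ᵥ v) i‖ ^ 2
      = ∑ c ∈ Finset.image k Finset.univ, ∑ i ∈ Finset.univ.filter (fun i => k i = c),
          ‖(K *ᵥ (vc c)) i‖ ^ 2 := by
    rw [← Finset.sum_fiberwise_of_maps_to (s := Finset.univ) (t := Finset.image k Finset.univ)
      (g := k) (f := fun i => ‖(B *ᵥ v) i‖ ^ 2)
      (fun i _ => Finset.mem_image_of_mem k (Finset.mem_univ i))]
    apply Finset.sum_congr rfl
    intro c _
    apply Finset.sum_congr rfl
    intro i hi
    rw [Finset.mem_filter] at hi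
    rw [key i, hi.2]
  have step2 : ∀ c, ∑ i ∈ Finset.univ.filter (fun i => k i = c), ‖(K *ᵥ (vc c)) i‖ ^ 2
      ≤ (opNorm K) ^ 2 * ∑ j, ‖vc c j‖ ^ 2 := by
    intro c
    calc ∑ i ∈ Finset.univ.filter (fun i => k i = c), ‖(K *ᵥ (vc c)) i‖ ^ 2
        ≤ ∑ i, ‖(K *ᵥ (vc c)) i‖ ^ 2 :=
          Finset.sum_le_sum_of_subset_of_nonneg (Finset.filter_subset _ _)
            (fun i _ _ => by positivity)
      _ ≤ (opNorm K) ^ 2 * ∑ j, ‖vc c j‖ ^ 2 := sq_mulVec_le K (vc c)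
  have step3 : ∑ c ∈ Finset.image k Finset.univ, ∑ j, ‖vc c j‖ ^ 2 = ∑ j, ‖v j‖ ^ 2 := by
    rw [Finset.sum_comm]
    apply Finset.sum_congr rfl
    intro j _
    rw [Finset.sum_eq_single (k j)]
    · show ‖(if k j = k j then v j else 0)‖ ^ 2 = ‖v j‖ ^ 2
      rw [if_pos rfl]
    · intro c _ hc
      show ‖(if k j = c then v j else 0)‖ ^ 2 = 0
      rw [if_neg (fun h => hc h.symm), norm_zero]
      norm_num
    · intro hj; exact absurd (Finset.mem_image_of_mem k (Finset.mem_univ j)) hj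
  calc ∑ i, ‖(B *ᵥ v) i‖ ^ 2
      = ∑ c ∈ Finset.image k Finset.univ, ∑ i ∈ Finset.univ.filter (fun i => k i = c),
          ‖(K *ᵥ (vc c)) i‖ ^ 2 := step1
    _ ≤ ∑ c ∈ Finset.image k Finset.univ, (opNorm K) ^ 2 * ∑ j, ‖vc c j‖ ^ 2 :=
        Finset.sum_le_sum fun c _ => step2 c
    _ = (opNorm K) ^ 2 * ∑ c ∈ Finset.image k Finset.univ, ∑ j, ‖vc c j‖ ^ 2 := by
        rw [Finset.mul_sum]
    _ = (opNorm K) ^ 2 * ∑ j, ‖v j‖ ^ 2 := by rw [step3]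

end ACH

namespace ACH
open Matrix MeasureTheory
open scoped ENNReal

lemma cut_vol_le {ε : ℝ} (hε : 0 < ε) {x y : ℝ} (hxy : x ≤ y) :
    volume ({t : ℝ | ⌊(x - t)/ε⌋ ≠ ⌊(y - t)/ε⌋} ∩ Set.Ioc 0 ε)
      ≤ ENNReal.ofReal (3 * (y - x)) := by
  by_cases hcase : ε ≤ 3 * (y - x)
  · calc volume ({t : ℝ | ⌊(x - t)/ε⌋ ≠ ⌊(y - t)/ε⌋} ∩ Set.Ioc 0 ε)
        ≤ volume (Set.Ioc (0:ℝ) ε) := measure_mono Set.inter_subset_right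
      _ = ENNReal.ofReal ε := by rw [Real.volume_Ioc, sub_zero]
      _ ≤ ENNReal.ofReal (3 * (y - x)) := ENNReal.ofReal_le_ofReal hcase
  · push_neg at hcase
    set m₁ : ℤ := ⌊x/ε⌋ with hm₁
    set m₂ : ℤ := ⌈y/ε⌉ with hm₂
    have hsub : {t : ℝ | ⌊(x - t)/ε⌋ ≠ ⌊(y - t)/ε⌋} ∩ Set.Ioc 0 ε
        ⊆ ⋃ m ∈ Finset.Icc m₁ m₂, Set.Ioc (x - m*ε) (y - m*ε) := by
      rintro t ⟨ht1, ht2⟩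
      obtain ⟨ht0, htε⟩ := ht2
      have hmono : ⌊(x - t)/ε⌋ ≤ ⌊(y - t)/ε⌋ := by
        apply Int.floor_le_floor
        rw [div_le_div_iff₀ hε hε]
        nlinarith [hε.le]
      have hlt : ⌊(x - t)/ε⌋ < ⌊(y - t)/ε⌋ := lt_of_le_of_ne hmono ht1
      set m : ℤ := ⌊(y - t)/ε⌋ with hm
      have h1 : (x - t)/ε < (m : ℝ) := by
        have := Int.lt_floor_add_one ((x - t)/ε)
        have hcast : (⌊(x - t)/ε⌋ : ℝ) + 1 ≤ (m : ℝ) := by exact_mod_cast hlt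
        linarith
      have h2 : (m : ℝ) ≤ (y - t)/ε := Int.floor_le _
      have h1' : x - (m:ℝ)*ε < t := by
        have := (div_lt_iff₀ hε).mp h1
        linarith
      have h2' : t ≤ y - (m:ℝ)*ε := by
        have := (le_div_iff₀ hε).mp h2
        linarith
      have hmlow : m₁ ≤ m := by
        have hreal : x/ε < (m : ℝ) + 1 := by
          have : x - (m:ℝ)*ε < ε := lt_of_lt_of_le h1' htε
          rw [div_lt_iff₀ hε]; linarith
        have : (m₁ : ℝ) ≤ x/ε := Int.floor_le _
        have : (m₁ : ℝ) < (m:ℝ) + 1 := lt_of_le_of_lt this hreal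
        exact_mod_cast Int.lt_add_one_iff.mp (by exact_mod_cast this)
      have hmhigh : m ≤ m₂ := by
        have hreal : (m : ℝ) ≤ y/ε := by
          have : (m:ℝ)*ε ≤ y := by linarith
          rw [le_div_iff₀ hε]; linarith
        calc m = ⌈(m : ℝ)⌉ := (Int.ceil_intCast m).symm
          _ ≤ m₂ := Int.ceil_le_ceil hreal
      exact Set.mem_biUnion (Finset.mem_Icc.mpr ⟨hmlow, hmhigh⟩) ⟨h1', h2'⟩
    calc volume ({t : ℝ | ⌊(x - t)/ε⌋ ≠ ⌊(y - t)/ε⌋} ∩ Set.Ioc 0 ε)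
        ≤ volume (⋃ m ∈ Finset.Icc m₁ m₂, Set.Ioc (x - m*ε) (y - m*ε)) := measure_mono hsub
      _ ≤ ∑ m ∈ Finset.Icc m₁ m₂, volume (Set.Ioc (x - m*ε) (y - m*ε)) :=
          measure_biUnion_finset_le _ _
      _ = ∑ _m ∈ Finset.Icc m₁ m₂, ENNReal.ofReal (y - x) := by
          apply Finset.sum_congr rfl
          intro m _
          rw [Real.volume_Ioc]
          congr 1
          ring
      _ ≤ ENNReal.ofReal (3 * (y - x)) := by
          rw [Finset.sum_const, nsmul_eq_mul]
          have hcard : (Finset.Icc m₁ m₂).card ≤ 3 := by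
            have hc2 : m₂ ≤ m₁ + 2 := by
              have h1 : (m₂ : ℝ) - 1 < y/ε := by
                have := Int.ceil_lt_add_one (y/ε)
                linarith
              have h2 : x/ε < (m₁ : ℝ) + 1 := Int.lt_floor_add_one _
              have h3 : y/ε < x/ε + 1 := by
                have : y - x < ε / 3 := by linarith
                have : (y - x)/ε < 1/3 := by
                  rw [div_lt_iff₀ hε]; linarith
                have hsplit : y/ε = x/ε + (y-x)/ε := by field_simp; ring
                linarith
              have : (m₂ : ℝ) < (m₁ : ℝ) + 3 := by linarith
              have : m₂ < m₁ + 3 := by exact_mod_cast this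
              omega
            rw [Int.card_Icc]
            omega
          calc ((Finset.Icc m₁ m₂).card : ℝ≥0∞) * ENNReal.ofReal (y - x)
              ≤ 3 * ENNReal.ofReal (y - x) := by
                apply mul_le_mul_left
                exact_mod_cast hcard
            _ = ENNReal.ofReal (3 * (y - x)) := by
                rw [ENNReal.ofReal_mul (by norm_num : (0:ℝ) ≤ 3)]
                norm_num

lemma exists_good_shift {n : ℕ} (d : Fin n → ℝ) (w : Fin n → Fin n → ℝ) (hw : ∀ i j, 0 ≤ w i j)
    {ε : ℝ} (hε : 0 < ε) :
    ∃ t : ℝ, ∑ p : Fin n × Fin n, (if ⌊(d p.1 - t)/ε⌋ = ⌊(d p.2 - t)/ε⌋ then 0 else w p.1 p.2)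
      ≤ (3 / ε) * ∑ p : Fin n × Fin n, w p.1 p.2 * |d p.1 - d p.2| := by
  set μ := volume.restrict (Set.Ioc (0:ℝ) ε) with hμdef
  have hμuniv : μ Set.univ = ENNReal.ofReal ε := by
    rw [hμdef, Measure.restrict_apply_univ, Real.volume_Ioc, sub_zero]
  haveI : IsFiniteMeasure μ := ⟨by rw [hμuniv]; exact ENNReal.ofReal_lt_top⟩
  have hμ0 : μ ≠ 0 := by
    intro h
    rw [h] at hμuniv
    simp only [Measure.coe_zero, Pi.zero_apply] at hμuniv
    have := ENNReal.ofReal_pos.mpr hε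
    rw [← hμuniv] at this
    exact lt_irrefl _ this
  set g : Fin n × Fin n → ℝ → ℝ :=
    fun p t => if ⌊(d p.1 - t)/ε⌋ = ⌊(d p.2 - t)/ε⌋ then 0 else w p.1 p.2 with hg
  have hmeas_fl : ∀ c : ℝ, Measurable fun t : ℝ => ⌊(c - t)/ε⌋ := fun c =>
    ((measurable_const.sub measurable_id).div_const ε).floor
  have hSmeas : ∀ p : Fin n × Fin n,
      MeasurableSet {t : ℝ | ⌊(d p.1 - t)/ε⌋ = ⌊(d p.2 - t)/ε⌋} := by
    intro p
    have hset : {t : ℝ | ⌊(d p.1 - t)/ε⌋ = ⌊(d p.2 - t)/ε⌋}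
        = (fun t => ⌊(d p.1 - t)/ε⌋ - ⌊(d p.2 - t)/ε⌋) ⁻¹' {0} := by
      ext u; simp [sub_eq_zero]
    rw [hset]
    exact ((hmeas_fl _).sub (hmeas_fl _)) (measurableSet_singleton 0)
  have hgmeas : ∀ p, Measurable (g p) := fun p =>
    Measurable.ite (hSmeas p) measurable_const measurable_const
  have hgint : ∀ p, Integrable (g p) μ := by
    intro p
    refine ⟨(hgmeas p).aestronglyMeasurable, ?_⟩
    apply HasFiniteIntegral.of_bounded (C := w p.1 p.2)
    apply ae_of_all
    intro t
    by_cases h : ⌊(d p.1 - t)/ε⌋ = ⌊(d p.2 - t)/ε⌋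
    · simp [hg, h, hw p.1 p.2]
    · simp [hg, h, abs_of_nonneg (hw p.1 p.2)]
  set F : ℝ → ℝ := fun t => ∑ p : Fin n × Fin n, g p t with hF
  have hFint : Integrable F μ := integrable_finset_sum _ (fun p _ => hgint p)
  obtain ⟨t, ht⟩ := exists_le_average hμ0 hFint
  refine ⟨t, le_trans ht ?_⟩
  rw [average_eq, measureReal_def, hμuniv, ENNReal.toReal_ofReal hε.le]
  have hint_eq : ∫ u, F u ∂μ = ∑ p : Fin n × Fin n, ∫ u, g p u ∂μ :=
    integral_finset_sum _ (fun p _ => hgint p)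
  have hbound : ∀ p : Fin n × Fin n,
      ∫ u, g p u ∂μ ≤ 3 * (w p.1 p.2 * |d p.1 - d p.2|) := by
    intro p
    have hrepr : g p = Set.indicator {u : ℝ | ⌊(d p.1 - u)/ε⌋ = ⌊(d p.2 - u)/ε⌋}ᶜ
        (fun _ => w p.1 p.2) := by
      funext u
      by_cases h : ⌊(d p.1 - u)/ε⌋ = ⌊(d p.2 - u)/ε⌋
      · simp [hg, h, Set.indicator, Set.mem_compl_iff]
      · simp [hg, h, Set.indicator, Set.mem_compl_iff]
    rw [hrepr, integral_indicator (hSmeas p).compl, setIntegral_const,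
      measureReal_def, Measure.restrict_apply (hSmeas p).compl]
    have hvol : volume ({u : ℝ | ⌊(d p.1 - u)/ε⌋ = ⌊(d p.2 - u)/ε⌋}ᶜ ∩ Set.Ioc 0 ε)
        ≤ ENNReal.ofReal (3 * |d p.1 - d p.2|) := by
      have hcompl : {u : ℝ | ⌊(d p.1 - u)/ε⌋ = ⌊(d p.2 - u)/ε⌋}ᶜ
          = {u : ℝ | ⌊(d p.1 - u)/ε⌋ ≠ ⌊(d p.2 - u)/ε⌋} := rfl
      rw [hcompl]
      rcases le_total (d p.1) (d p.2) with hle | hle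
      · rw [abs_of_nonpos (by linarith : d p.1 - d p.2 ≤ 0)]
        have := cut_vol_le hε hle
        simpa [neg_sub] using this
      · rw [abs_of_nonneg (by linarith : 0 ≤ d p.1 - d p.2)]
        have := cut_vol_le hε hle
        have hsymm : {u : ℝ | ⌊(d p.2 - u)/ε⌋ ≠ ⌊(d p.1 - u)/ε⌋}
            = {u : ℝ | ⌊(d p.1 - u)/ε⌋ ≠ ⌊(d p.2 - u)/ε⌋} := by
          ext u; simp [ne_comm]
        rw [hsymm] at this
        exact this
    have htoReal : (volume ({u : ℝ | ⌊(d p.1 - u)/ε⌋ = ⌊(d p.2 - u)/ε⌋}ᶜ ∩ Set.Ioc 0 ε)).toReal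
        ≤ 3 * |d p.1 - d p.2| :=
      ENNReal.toReal_le_of_le_ofReal (by positivity) hvol
    rw [smul_eq_mul]
    calc (volume ({u : ℝ | ⌊(d p.1 - u)/ε⌋ = ⌊(d p.2 - u)/ε⌋}ᶜ ∩ Set.Ioc 0 ε)).toReal * w p.1 p.2
        ≤ (3 * |d p.1 - d p.2|) * w p.1 p.2 :=
          mul_le_mul_of_nonneg_right htoReal (hw p.1 p.2)
      _ = 3 * (w p.1 p.2 * |d p.1 - d p.2|) := by ring
  calc ε⁻¹ • ∫ u, F u ∂μ
      = ε⁻¹ * ∫ u, F u ∂μ := by rw [smul_eq_mul]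
    _ ≤ ε⁻¹ * (3 * ∑ p : Fin n × Fin n, w p.1 p.2 * |d p.1 - d p.2|) := by
        apply mul_le_mul_of_nonneg_left _ (by positivity)
        rw [hint_eq, Finset.mul_sum]
        exact Finset.sum_le_sum fun p _ => hbound p
    _ = (3 / ε) * ∑ p : Fin n × Fin n, w p.1 p.2 * |d p.1 - d p.2| := by
        field_simp


variable {n : ℕ}

lemma sum_sq_eq_card_mul (hn : 0 < n) (A : Matrix (Fin n) (Fin n) ℂ) :
    ∑ i, ∑ j, ‖A i j‖ ^ 2 = (n : ℝ) * hsNorm A ^ 2 := by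
  rw [hsNorm_sq]
  have hn' : (n : ℝ) ≠ 0 := Nat.cast_ne_zero.mpr hn.ne'
  field_simp

lemma hsNorm_diagonal_le {v : Fin n → ℝ} {c : ℝ} (hc : 0 ≤ c) (h : ∀ i, |v i| ≤ c) :
    hsNorm (Matrix.diagonal (fun i => (v i : ℂ))) ≤ c := by
  have hsum : ∀ i, ∑ j, ‖Matrix.diagonal (fun i => (v i : ℂ)) i j‖ ^ 2 ≤ c ^ 2 := by
    intro i
    rw [Finset.sum_eq_single i]
    · rw [Matrix.diagonal_apply_eq]
      have : ‖((v i : ℝ) : ℂ)‖ = |v i| := (Complex.norm_real _).trans (Real.norm_eq_abs _)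
      rw [this]
      exact pow_le_pow_left₀ (abs_nonneg _) (h i) 2
    · intro j _ hj
      rw [Matrix.diagonal_apply_ne' _ hj, norm_zero]
      norm_num
    · intro hi; exact absurd (Finset.mem_univ i) hi
  rw [hsNorm]
  rw [show c = Real.sqrt (c ^ 2) by rw [Real.sqrt_sq hc]]
  apply Real.sqrt_le_sqrt
  rcases Nat.eq_zero_or_pos n with hn | hn
  · subst hn; simp; positivity
  · have : ∑ i, ∑ j, ‖Matrix.diagonal (fun i => (v i : ℂ)) i j‖ ^ 2 ≤ (n:ℝ) * c ^ 2 := by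
      calc ∑ i, ∑ j, ‖Matrix.diagonal (fun i => (v i : ℂ)) i j‖ ^ 2
          ≤ ∑ _i : Fin n, c ^ 2 := Finset.sum_le_sum fun i _ => hsum i
        _ = (n:ℝ) * c ^ 2 := by rw [Finset.sum_const, Finset.card_univ, Fintype.card_fin,
            nsmul_eq_mul]
    have hn' : (0:ℝ) < n := by exact_mod_cast hn
    rw [div_mul_eq_mul_div, one_mul, div_le_iff₀ hn']
    linarith

end ACH

open Matrix ACH in
/-- **Theorem (main).** If `H₁, H₂` are Hermitian contractions with
`δ = ‖[H₁,H₂]‖_tr ≤ 1/16`, then there are commuting Hermitian contractions `A₁, A₂`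
with `[H₁,A₁] = 0` and `‖H₁ - A₁‖_tr ≤ 2 δ^{1/4}` and `‖H₂ - A₂‖_tr ≤ √3 δ^{1/4}`. -/
theorem almost_commuting_hs_sharp (n : ℕ) (hn : 0 < n) (H₁ H₂ : Matrix (Fin n) (Fin n) ℂ)
    (hH₁ : H₁.IsHermitian) (hH₂ : H₂.IsHermitian)
    (hop₁ : opNorm H₁ ≤ 1) (hop₂ : opNorm H₂ ≤ 1)
    (δ : ℝ) (hδ : δ = hsNorm (H₁ * H₂ - H₂ * H₁)) (hδ16 : δ ≤ 1 / 16) :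
    ∃ A₁ A₂ : Matrix (Fin n) (Fin n) ℂ,
      A₁.IsHermitian ∧ A₂.IsHermitian ∧
      opNorm A₁ ≤ 1 ∧ opNorm A₂ ≤ 1 ∧
      A₁ * A₂ - A₂ * A₁ = 0 ∧
      H₁ * A₁ - A₁ * H₁ = 0 ∧
      hsNorm (H₁ - A₁) ≤ 2 * δ ^ ((1 : ℝ) / 4) ∧
      hsNorm (H₂ - A₂) ≤ Real.sqrt 3 * δ ^ ((1 : ℝ) / 4) := by
  classical
  set U : Matrix (Fin n) (Fin n) ℂ := (hH₁.eigenvectorUnitary : Matrix (Fin n) (Fin n) ℂ)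
    with hUdef
  have hU : U ∈ Matrix.unitaryGroup (Fin n) ℂ := SetLike.coe_mem _
  have hU'U : star U * U = 1 := Unitary.star_mul_self_of_mem hU
  have hUU' : U * star U = 1 := Unitary.mul_star_self_of_mem hU
  set d : Fin n → ℝ := hH₁.eigenvalues with hddef
  set D : Matrix (Fin n) (Fin n) ℂ := Matrix.diagonal (fun i => (d i : ℂ)) with hDdef
  have hDeq : star U * H₁ * U = D := by
    have := hH₁.conjStarAlgAut_star_eigenvectorUnitary
    rw [Unitary.conjStarAlgAut_apply, Unitary.coe_star, star_star] at this
    exact this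
  have conjU_mul : ∀ X Y : Matrix (Fin n) (Fin n) ℂ,
      (U * X * star U) * (U * Y * star U) = U * (X * Y) * star U := by
    intro X Y
    calc (U * X * star U) * (U * Y * star U)
        = U * (X * ((star U * U) * (Y * star U))) := by simp only [mul_assoc]
      _ = U * (X * Y) * star U := by rw [hU'U, one_mul]; simp only [mul_assoc]
  have conjU'_mul : ∀ X Y : Matrix (Fin n) (Fin n) ℂ,
      (star U * X * U) * (star U * Y * U) = star U * (X * Y) * U := by
    intro X Y
    calc (star U * X * U) * (star U * Y * U)
        = star U * (X * ((U * star U) * (Y * U))) := by simp only [mul_assoc]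
      _ = star U * (X * Y) * U := by rw [hUU', one_mul]; simp only [mul_assoc]
  have hH1eq : H₁ = U * D * star U := by
    rw [← hDeq]
    calc H₁ = (U * star U) * H₁ * (U * star U) := by rw [hUU', one_mul, mul_one]
      _ = U * (star U * H₁ * U) * star U := by simp only [mul_assoc]
  set K : Matrix (Fin n) (Fin n) ℂ := star U * H₂ * U with hKdef
  have hH2eq : H₂ = U * K * star U := by
    rw [hKdef]
    calc H₂ = (U * star U) * H₂ * (U * star U) := by rw [hUU', one_mul, mul_one]
      _ = U * (star U * H₂ * U) * star U := by simp only [mul_assoc]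
  have hconj_op : ∀ A : Matrix (Fin n) (Fin n) ℂ, opNorm (star U * A * U) = opNorm A := by
    intro A
    have := opNorm_conj (Unitary.star_mem hU) A
    rwa [star_star] at this
  have hconj_hs : ∀ A : Matrix (Fin n) (Fin n) ℂ, hsNorm (star U * A * U) = hsNorm A := by
    intro A
    have := hsNorm_conj (Unitary.star_mem hU) A
    rwa [star_star] at this
  have hopD : opNorm D ≤ 1 := by rw [← hDeq, hconj_op]; exact hop₁
  have hopK : opNorm K ≤ 1 := by rw [hKdef, hconj_op]; exact hop₂
  have hd_le : ∀ i, |d i| ≤ 1 := by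
    intro i
    have h1 : ‖D i i‖ ≤ opNorm D := entry_le D i i
    rw [hDdef, Matrix.diagonal_apply_eq] at h1
    have : ‖((d i : ℝ) : ℂ)‖ = |d i| := (Complex.norm_real _).trans (Real.norm_eq_abs _)
    rw [this] at h1
    exact h1.trans hopD
  have hKherm : K.IsHermitian := by
    have := Matrix.isHermitian_mul_mul_conjTranspose (star U) hH₂
    rwa [Matrix.star_eq_conjTranspose, Matrix.conjTranspose_conjTranspose] at this
  have hKentry : ∀ i j, ‖K i j‖ ≤ 1 := fun i j => (entry_le K i j).trans hopK
  have hCeq : star U * (H₁ * H₂ - H₂ * H₁) * U = D * K - K * D := by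
    rw [Matrix.mul_sub, Matrix.sub_mul, ← hDeq, hKdef, conjU'_mul, conjU'_mul]
  have hδ' : hsNorm (D * K - K * D) = δ := by rw [← hCeq, hconj_hs, hδ]
  have hδ0 : 0 ≤ δ := hδ ▸ hsNorm_nonneg _
  have hC'entry : ∀ i j, ‖(D * K - K * D) i j‖ = |d i - d j| * ‖K i j‖ := by
    intro i j
    have : (D * K - K * D) i j = ((d i - d j : ℝ) : ℂ) * K i j := by
      rw [Matrix.sub_apply, hDdef, Matrix.diagonal_mul, Matrix.mul_diagonal]
      push_cast
      ring
    rw [this, norm_mul, Complex.norm_real, Real.norm_eq_abs]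
  rcases eq_or_lt_of_le hδ0 with hδz | hδpos
  · have hC0 : H₁ * H₂ - H₂ * H₁ = 0 := eq_zero_of_hsNorm hn (by rw [← hδ, ← hδz])
    refine ⟨H₁, H₂, hH₁, hH₂, hop₁, hop₂, hC0, by rw [sub_self], ?_, ?_⟩
    · rw [sub_self]
      have : hsNorm (0 : Matrix (Fin n) (Fin n) ℂ) = 0 := by simp [hsNorm]
      rw [this]
      positivity
    · rw [sub_self]
      have : hsNorm (0 : Matrix (Fin n) (Fin n) ℂ) = 0 := by simp [hsNorm]
      rw [this]
      positivity
  · set ε : ℝ := Real.sqrt δ with hεdef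
    have hε : 0 < ε := Real.sqrt_pos.mpr hδpos
    obtain ⟨t, ht⟩ := exists_good_shift d (fun i j => ‖K i j‖ ^ 2)
      (fun i j => by positivity) hε
    set k : Fin n → ℤ := fun i => ⌊(d i - t)/ε⌋ with hkdef
    set a : Fin n → ℝ := fun i => max (-1) (t + ε * (k i : ℝ)) with hadef
    have hfloor1 : ∀ i, t + ε * (k i : ℝ) ≤ d i := by
      intro i
      have h1 : ((k i : ℤ) : ℝ) ≤ (d i - t)/ε := Int.floor_le _
      have := (le_div_iff₀ hε).mp h1
      linarith
    have hfloor2 : ∀ i, d i < t + ε * (k i : ℝ) + ε := by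
      intro i
      have h2 : (d i - t)/ε < (k i : ℝ) + 1 := Int.lt_floor_add_one _
      have := (div_lt_iff₀ hε).mp h2
      linarith
    have ha_le : ∀ i, |a i| ≤ 1 := by
      intro i
      rw [abs_le]
      constructor
      · exact le_max_left _ _
      · apply max_le
        · norm_num
        · exact (hfloor1 i).trans (abs_le.mp (hd_le i)).2
    have ha_near : ∀ i, |d i - a i| ≤ ε := by
      intro i
      have hd1 : -1 ≤ d i := (abs_le.mp (hd_le i)).1
      rw [abs_le]
      constructor
      · have : a i ≤ d i + ε := by
          apply max_le
          · linarith
          · linarith [hfloor1 i]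
        linarith
      · have : d i - ε ≤ a i := le_trans (by linarith [hfloor2 i]) (le_max_right _ _)
        linarith
    have hak : ∀ i j, k i = k j → a i = a j := by
      intro i j h
      simp only [hadef, h]
    set Da : Matrix (Fin n) (Fin n) ℂ := Matrix.diagonal (fun i => (a i : ℂ)) with hDadef
    set B₂ : Matrix (Fin n) (Fin n) ℂ := Matrix.of (fun i j => if k i = k j then K i j else 0)
      with hB₂def
    have hDaherm : Da.IsHermitian := by
      rw [Matrix.IsHermitian, hDadef, Matrix.diagonal_conjTranspose]
      have hst : (star fun i => ((a i : ℂ))) = fun i => ((a i : ℂ)) := by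
        funext i
        rw [Pi.star_apply, Complex.star_def, Complex.conj_ofReal]
      rw [hst]
    have hB₂herm : B₂.IsHermitian := by
      rw [Matrix.IsHermitian]
      ext i j
      rw [Matrix.conjTranspose_apply, hB₂def, Matrix.of_apply, Matrix.of_apply]
      by_cases h : k i = k j
      · rw [if_pos h.symm, if_pos h]
        calc star (K j i) = Kᴴ i j := rfl
          _ = K i j := by rw [hKherm]
      · rw [if_neg (fun hh => h hh.symm), if_neg h, star_zero]
    have hDaB₂ : Da * B₂ = B₂ * Da := by
      ext i j
      rw [hDadef, Matrix.diagonal_mul, Matrix.mul_diagonal]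
      by_cases h : k i = k j
      · have : a i = a j := hak i j h
        rw [this, mul_comm]
      · rw [hB₂def, Matrix.of_apply, if_neg h, mul_zero, zero_mul]
    have hDDa : D * Da = Da * D := by
      rw [hDdef, hDadef, Matrix.diagonal_mul_diagonal, Matrix.diagonal_mul_diagonal]
      have : (fun i => (d i : ℂ) * (a i : ℂ)) = fun i => (a i : ℂ) * (d i : ℂ) := by
        funext i; ring
      rw [this]
    refine ⟨U * Da * star U, U * B₂ * star U, ?_, ?_, ?_, ?_, ?_, ?_, ?_, ?_⟩
    · have := Matrix.isHermitian_mul_mul_conjTranspose U hDaherm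
      rwa [← Matrix.star_eq_conjTranspose] at this
    · have := Matrix.isHermitian_mul_mul_conjTranspose U hB₂herm
      rwa [← Matrix.star_eq_conjTranspose] at this
    · rw [opNorm_conj hU]
      exact opNorm_diagonal_le a zero_le_one ha_le
    · rw [opNorm_conj hU]
      exact (opNorm_pinch K k).trans hopK
    · rw [conjU_mul, conjU_mul, hDaB₂, sub_self]
    · rw [hH1eq, conjU_mul, conjU_mul, hDDa, sub_self]
    · -- hsNorm (H₁ - A₁) ≤ 2 δ^{1/4}
      have hdiff : H₁ - U * Da * star U = U * (D - Da) * star U := by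
        rw [hH1eq, ← Matrix.sub_mul, ← Matrix.mul_sub]
      rw [hdiff, hsNorm_conj hU]
      have hDDa' : D - Da = Matrix.diagonal (fun i => ((d i - a i : ℝ) : ℂ)) := by
        rw [hDdef, hDadef, Matrix.diagonal_sub]
        congr 1
        funext i
        push_cast
        ring
      rw [hDDa']
      have h1 : hsNorm (Matrix.diagonal (fun i => ((d i - a i : ℝ) : ℂ))) ≤ ε :=
        hsNorm_diagonal_le hε.le ha_near
      refine h1.trans ?_
      -- ε = √δ ≤ 2 δ^{1/4}
      have h14 : δ ^ ((1:ℝ)/4) ≤ 2 := by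
        have h16 : (16:ℝ) ^ ((1:ℝ)/4) = 2 := by
          rw [show (16:ℝ) = 2 ^ (4:ℕ) by norm_num, ← Real.rpow_natCast 2 4,
            ← Real.rpow_mul (by norm_num : (0:ℝ) ≤ 2)]
          norm_num
        calc δ ^ ((1:ℝ)/4) ≤ (16:ℝ) ^ ((1:ℝ)/4) :=
              Real.rpow_le_rpow hδ0 (by linarith) (by norm_num)
          _ = 2 := h16
      have hsqrt : ε = δ ^ ((1:ℝ)/4) * δ ^ ((1:ℝ)/4) := by
        rw [hεdef, Real.sqrt_eq_rpow, show (1:ℝ)/2 = 1/4 + 1/4 by norm_num,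
          Real.rpow_add hδpos]
      rw [hsqrt]
      exact mul_le_mul_of_nonneg_right h14 (Real.rpow_nonneg hδ0 _)
    · -- hsNorm (H₂ - A₂) ≤ √3 δ^{1/4}
      have hdiff : H₂ - U * B₂ * star U = U * (K - B₂) * star U := by
        rw [hH2eq, ← Matrix.sub_mul, ← Matrix.mul_sub]
      rw [hdiff, hsNorm_conj hU]
      -- entrywise description
      have hKB : ∀ i j, ‖(K - B₂) i j‖ ^ 2
          = if k i = k j then 0 else ‖K i j‖ ^ 2 := by
        intro i j
        rw [Matrix.sub_apply, hB₂def, Matrix.of_apply]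
        by_cases h : k i = k j
        · rw [if_pos h, if_pos h, sub_self, norm_zero]
          norm_num
        · rw [if_neg h, if_neg h, sub_zero]
      have hsum1 : ∑ i, ∑ j, ‖(K - B₂) i j‖ ^ 2
          ≤ (3 / ε) * ∑ p : Fin n × Fin n, ‖K p.1 p.2‖ ^ 2 * |d p.1 - d p.2| := by
        refine le_trans (le_of_eq ?_) ht
        calc ∑ i, ∑ j, ‖(K - B₂) i j‖ ^ 2
            = ∑ i, ∑ j, (if k i = k j then 0 else ‖K i j‖ ^ 2) := by
              apply Finset.sum_congr rfl
              intro i _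
              apply Finset.sum_congr rfl
              intro j _
              rw [hKB]
          _ = ∑ p : Fin n × Fin n, (if k p.1 = k p.2 then 0 else ‖K p.1 p.2‖ ^ 2) := by
              rw [← Finset.univ_product_univ, Finset.sum_product]
      -- Cauchy-Schwarz
      have hCS : ∑ p : Fin n × Fin n, ‖K p.1 p.2‖ ^ 2 * |d p.1 - d p.2| ≤ (n : ℝ) * δ := by
        have hterm : ∀ p : Fin n × Fin n, ‖K p.1 p.2‖ ^ 2 * |d p.1 - d p.2|
            = ‖K p.1 p.2‖ * ‖(D * K - K * D) p.1 p.2‖ := by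
          intro p
          rw [hC'entry]
          ring
        have hnR : (0:ℝ) < (n : ℝ) := by exact_mod_cast hn
        have hS1 : ∑ p : Fin n × Fin n, ‖K p.1 p.2‖ ^ 2 ≤ (n : ℝ) := by
          have hK1 : hsNorm K ≤ 1 := (hsNorm_le_opNorm hn K).trans hopK
          have hK0 : 0 ≤ hsNorm K := hsNorm_nonneg K
          calc ∑ p : Fin n × Fin n, ‖K p.1 p.2‖ ^ 2 = ∑ i, ∑ j, ‖K i j‖ ^ 2 := by
                rw [← Finset.univ_product_univ, Finset.sum_product]
            _ = (n : ℝ) * hsNorm K ^ 2 := sum_sq_eq_card_mul hn K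
            _ ≤ (n : ℝ) := by
                have h2 : hsNorm K ^ 2 ≤ 1 := by nlinarith
                nlinarith
        have hS2 : ∑ p : Fin n × Fin n, ‖(D * K - K * D) p.1 p.2‖ ^ 2 = (n : ℝ) * δ ^ 2 := by
          calc ∑ p : Fin n × Fin n, ‖(D * K - K * D) p.1 p.2‖ ^ 2
              = ∑ i, ∑ j, ‖(D * K - K * D) i j‖ ^ 2 := by
                rw [← Finset.univ_product_univ, Finset.sum_product]
            _ = (n : ℝ) * δ ^ 2 := by rw [sum_sq_eq_card_mul hn, hδ']
        have hCS' := Finset.sum_mul_sq_le_sq_mul_sq Finset.univ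
          (fun p : Fin n × Fin n => ‖K p.1 p.2‖)
          (fun p : Fin n × Fin n => ‖(D * K - K * D) p.1 p.2‖)
        have hS3nn : 0 ≤ ∑ p : Fin n × Fin n, ‖K p.1 p.2‖ * ‖(D * K - K * D) p.1 p.2‖ :=
          Finset.sum_nonneg fun p _ => by positivity
        calc ∑ p : Fin n × Fin n, ‖K p.1 p.2‖ ^ 2 * |d p.1 - d p.2|
            = ∑ p : Fin n × Fin n, ‖K p.1 p.2‖ * ‖(D * K - K * D) p.1 p.2‖ :=
              Finset.sum_congr rfl fun p _ => hterm p
          _ ≤ (n : ℝ) * δ := by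
              have hS2nn : (0:ℝ) ≤ ∑ p : Fin n × Fin n, ‖(D * K - K * D) p.1 p.2‖ ^ 2 :=
                Finset.sum_nonneg fun p _ => by positivity
              have hsq : (∑ p : Fin n × Fin n, ‖K p.1 p.2‖ * ‖(D * K - K * D) p.1 p.2‖) ^ 2
                  ≤ ((n:ℝ) * δ) ^ 2 := by
                calc (∑ p : Fin n × Fin n, ‖K p.1 p.2‖ * ‖(D * K - K * D) p.1 p.2‖) ^ 2
                    ≤ (∑ p : Fin n × Fin n, ‖K p.1 p.2‖ ^ 2)
                      * (∑ p : Fin n × Fin n, ‖(D * K - K * D) p.1 p.2‖ ^ 2) := hCS'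
                  _ ≤ (n:ℝ) * ((n:ℝ) * δ ^ 2) := by
                      rw [hS2]
                      apply mul_le_mul_of_nonneg_right hS1 (by positivity)
                  _ = ((n:ℝ) * δ) ^ 2 := by ring
              exact le_of_pow_le_pow_left₀ two_ne_zero (by positivity) hsq
      -- put together
      have hfinal : hsNorm (K - B₂) ^ 2 ≤ 3 * Real.sqrt δ := by
        rw [hsNorm_sq]
        have hn' : (0:ℝ) < n := Nat.cast_pos.mpr hn
        have hchain : ∑ i, ∑ j, ‖(K - B₂) i j‖ ^ 2 ≤ (3 / ε) * ((n:ℝ) * δ) := by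
          refine hsum1.trans ?_
          apply mul_le_mul_of_nonneg_left hCS (by positivity)
        calc (1 / (n : ℝ)) * ∑ i, ∑ j, ‖(K - B₂) i j‖ ^ 2
            ≤ (1 / (n : ℝ)) * ((3 / ε) * ((n:ℝ) * δ)) := by
              apply mul_le_mul_of_nonneg_left hchain (by positivity)
          _ = 3 * (δ / ε) := by field_simp
          _ = 3 * Real.sqrt δ := by rw [hεdef, Real.div_sqrt]
      have hrhs : (Real.sqrt 3 * δ ^ ((1:ℝ)/4)) ^ 2 = 3 * Real.sqrt δ := by
        rw [mul_pow, Real.sq_sqrt (by norm_num : (0:ℝ) ≤ 3), ← Real.rpow_natCast (δ ^ ((1:ℝ)/4)) 2,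
          ← Real.rpow_mul hδ0, Real.sqrt_eq_rpow]
        norm_num
      have h0 : 0 ≤ Real.sqrt 3 * δ ^ ((1:ℝ)/4) := by positivity
      refine le_of_pow_le_pow_left₀ two_ne_zero h0 ?_
      rw [hrhs]
      exact hfinal
end
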